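/- Let 𝒳 be a coherent configuration and e_𝒳 its twin parabolic. If the quotient coherent configuration 𝒳/e_𝒳 is separable, then 𝒳 is separable. -/

import Mathlib

open Set

universe u v

variable {Ω : Type*}

/-- The diagonal relation `1_Δ` of a set `Δ ⊆ Ω`. -/
def diagRel (Δ : Set Ω) : Set (Ω × Ω) := {p | p.1 = p.2 ∧ p.1 ∈ Δ}

/-- The number of points `γ` with `(p.1, γ) ∈ r` and `(γ, p.2) ∈ s`. -/
noncomputable def interNum (r s : Set (Ω × Ω)) (p : Ω × Ω) : ℕ :=
  {γ : Ω | (p.1, γ) ∈ r ∧ (γ, p.2) ∈ s}.ncard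

/-- A coherent configuration on `Ω`: a partition `S` of `Ω × Ω` such that the diagonal
is a union of classes, `S` is closed under transposition, and the intersection numbers
are well defined. -/
structure CoherentConfiguration (Ω : Type u) where
  S : Set (Set (Ω × Ω))
  isPartition : Setoid.IsPartition S
  diag_isRelation : ∃ T ⊆ S, ⋃₀ T = diagRel (Set.univ : Set Ω)
  swap_mem : ∀ s ∈ S, {p : Ω × Ω | (p.2, p.1) ∈ s} ∈ S
  coherent : ∀ r ∈ S, ∀ s ∈ S, ∀ t ∈ S, ∀ p ∈ t, ∀ q ∈ t,
    interNum r s p = interNum r s q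

namespace CoherentConfiguration

/-- A relation of `X` is a union of basis relations of `X`. -/
def IsRelation (X : CoherentConfiguration Ω) (r : Set (Ω × Ω)) : Prop :=
  ∃ T ⊆ X.S, ⋃₀ T = r

/-- A fiber of `X` is a set `Δ` with `1_Δ` a basis relation. -/
def IsFiber (X : CoherentConfiguration Ω) (Δ : Set Ω) : Prop :=
  diagRel Δ ∈ X.S

end CoherentConfiguration

/-- `X ≤ Y` iff every relation of `X` is a relation of `Y`. -/
def CCle (X Y : CoherentConfiguration Ω) : Prop :=
  ∀ r, X.IsRelation r → Y.IsRelation r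

/-- The arc set of a graph, as a set of ordered pairs. -/
def adjRel (G : SimpleGraph Ω) : Set (Ω × Ω) := {p | G.Adj p.1 p.2}

/-- `X = WL(G)`: the smallest coherent configuration having the arc set of `G`
among its relations. -/
def IsWL (G : SimpleGraph Ω) (X : CoherentConfiguration Ω) : Prop :=
  X.IsRelation (adjRel G) ∧
    ∀ Y : CoherentConfiguration Ω, Y.IsRelation (adjRel G) → CCle X Y

/-- `X = WL(G)_π`: the smallest coherent configuration having the arc set of `G`
and every `1_Δ`, `Δ ∈ π`, among its relations. -/
def IsWLPart (G : SimpleGraph Ω) (π : Set (Set Ω)) (X : CoherentConfiguration Ω) : Prop :=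
  X.IsRelation (adjRel G) ∧ (∀ Δ ∈ π, X.IsRelation (diagRel Δ)) ∧
    ∀ Y : CoherentConfiguration Ω, Y.IsRelation (adjRel G) →
      (∀ Δ ∈ π, Y.IsRelation (diagRel Δ)) → CCle X Y

/-- A graph is distance-hereditary if in every connected induced subgraph the distance
function is the same as in the graph itself. -/
def DistanceHereditary {V : Type*} (G : SimpleGraph V) : Prop :=
  ∀ s : Set V, (G.induce s).Connected →
    ∀ u v : s, (G.induce s).dist u v = G.dist u.1 v.1

/-- Two vertices are twins in a graph if every other vertex is adjacent to both
or to neither. -/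
def IsTwin (G : SimpleGraph Ω) (a b : Ω) : Prop :=
  ∀ γ, γ ≠ a → γ ≠ b → (G.Adj γ a ↔ G.Adj γ b)

/-- Two points are `X`-twins if for every other point `γ`, the basis relation containing
`(γ, a)` coincides with the one containing `(γ, b)`. -/
def XTwin (X : CoherentConfiguration Ω) (a b : Ω) : Prop :=
  ∀ γ, γ ≠ a → γ ≠ b → ∀ s ∈ X.S, ((γ, a) ∈ s ↔ (γ, b) ∈ s)

/-- The relation `e_X` of being `X`-twins, as a set of pairs. -/
def twinRel (X : CoherentConfiguration Ω) : Set (Ω × Ω) := {p | XTwin X p.1 p.2}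

/-- An equivalence relation on `Ω`, given as a set of pairs. -/
def IsEquivSet (e : Set (Ω × Ω)) : Prop :=
  (∀ a, (a, a) ∈ e) ∧ (∀ a b, (a, b) ∈ e → (b, a) ∈ e) ∧
    (∀ a b c, (a, b) ∈ e → (b, c) ∈ e → (a, c) ∈ e)

/-- A parabolic of `X` is an equivalence relation which is a relation of `X`. -/
def IsParabolic (X : CoherentConfiguration Ω) (e : Set (Ω × Ω)) : Prop :=
  IsEquivSet e ∧ X.IsRelation e

/-- The dot product (composition) of two relations. -/
def relComp (r s : Set (Ω × Ω)) : Set (Ω × Ω) :=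
  {p | ∃ c, (p.1, c) ∈ r ∧ (c, p.2) ∈ s}

/-- An algebraic isomorphism between coherent configurations: a bijection between the
sets of basis relations preserving the intersection numbers. -/
structure AlgIso {Ω : Type u} {Ω' : Type v} (X : CoherentConfiguration Ω)
    (X' : CoherentConfiguration Ω') where
  toFun : Set (Ω × Ω) → Set (Ω' × Ω')
  bijOn : Set.BijOn toFun X.S X'.S
  card_eq : ∀ r ∈ X.S, ∀ s ∈ X.S, ∀ t ∈ X.S, ∀ p ∈ t, ∀ p' ∈ toFun t,
      interNum r s p = interNum (toFun r) (toFun s) p'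

/-- `X` is separable: every algebraic isomorphism from `X` to another coherent
configuration is induced by a bijection of the point sets. -/
def CCSeparable {Ω : Type u} (X : CoherentConfiguration Ω) : Prop :=
  ∀ (Ω' : Type u), Finite Ω' → ∀ (X' : CoherentConfiguration Ω') (φ : AlgIso X X'),
    ∃ f : Ω → Ω', Function.Bijective f ∧ ∀ s ∈ X.S, φ.toFun s = Prod.map f f '' s

/-- `Ω₋(m)`. -/
def OmegaMinus (m : Set (Ω × Ω)) : Set Ω := {a | ∃ b, (a, b) ∈ m}

/-- `Ω₊(m)`. -/
def OmegaPlus (m : Set (Ω × Ω)) : Set Ω := {b | ∃ a, (a, b) ∈ m}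

/-- A matching of `X`: an irreflexive basis relation of valency one in both directions. -/
def IsMatchingCC (X : CoherentConfiguration Ω) (m : Set (Ω × Ω)) : Prop :=
  m ∈ X.S ∧ (∀ p ∈ m, p.1 ≠ p.2) ∧
    (∀ a b c, (a, b) ∈ m → (a, c) ∈ m → b = c) ∧
    (∀ a b c, (a, c) ∈ m → (b, c) ∈ m → a = b)

/-- A pendant matching of `X` with respect to the graph `G`. -/
def IsPendantMatching (G : SimpleGraph Ω) (X : CoherentConfiguration Ω)
    (m : Set (Ω × Ω)) : Prop :=
  IsMatchingCC X m ∧ OmegaMinus m ≠ OmegaPlus m ∧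
    ∀ p ∈ m, G.Adj p.1 p.2 ∧ ∀ c, G.Adj p.1 c → c = p.2

/-- A twin matching of `X` with respect to the graph `G`. -/
def IsTwinMatching (G : SimpleGraph Ω) (X : CoherentConfiguration Ω)
    (m : Set (Ω × Ω)) : Prop :=
  IsMatchingCC X m ∧ OmegaMinus m ≠ OmegaPlus m ∧ ∀ p ∈ m, IsTwin G p.1 p.2

/-- The quotient graph of `G` modulo a (twin) equivalence relation `r`: two distinct
classes are adjacent iff every vertex of one is adjacent to every vertex of the other. -/
def quotGraph (G : SimpleGraph Ω) (r : Ω → Ω → Prop) : SimpleGraph (Quot r) where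
  Adj c d := c ≠ d ∧ ∀ a b : Ω, Quot.mk r a = c → Quot.mk r b = d → G.Adj a b
  symm := ⟨fun _ _ h => ⟨h.1.symm, fun a b ha hb => (h.2 b a hb ha).symm⟩⟩
  loopless := ⟨fun _ h => h.1 rfl⟩

/-- The restriction of a relation on `Ω` to the complement of `Δ`. -/
def restrictRel (Δ : Set Ω) (s : Set (Ω × Ω)) : Set (↥(Δᶜ) × ↥(Δᶜ)) :=
  {p | ((p.1 : Ω), (p.2 : Ω)) ∈ s}

/-- The restriction of a subset of `Ω` to the complement of `Δ`. -/
def restrictSet (Δ Γ : Set Ω) : Set ↥(Δᶜ) := {x | (x : Ω) ∈ Γ}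

namespace CC15

open Set

set_option linter.unusedSectionVars false

attribute [local instance] Classical.propDecidable

universe x y

variable {Ω : Type x} {Ω' : Type y}

section Basic

variable (Y : CoherentConfiguration Ω)

noncomputable def relOf (p : Ω × Ω) : Set (Ω × Ω) := (Y.isPartition.2 p).choose

lemma relOf_mem (p : Ω × Ω) : relOf Y p ∈ Y.S := (Y.isPartition.2 p).choose_spec.1.1

lemma mem_relOf (p : Ω × Ω) : p ∈ relOf Y p := (Y.isPartition.2 p).choose_spec.1.2

variable {Y}

lemma relOf_eq {s : Set (Ω × Ω)} (hs : s ∈ Y.S) {p : Ω × Ω} (hp : p ∈ s) :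
    relOf Y p = s :=
  ((Y.isPartition.2 p).choose_spec.2 s ⟨hs, hp⟩).symm

lemma rel_eq_of_mem {s t : Set (Ω × Ω)} (hs : s ∈ Y.S) (ht : t ∈ Y.S) {p : Ω × Ω}
    (hps : p ∈ s) (hpt : p ∈ t) : s = t := by
  rw [← relOf_eq hs hps, ← relOf_eq ht hpt]

lemma rel_nonempty {s : Set (Ω × Ω)} (hs : s ∈ Y.S) : s.Nonempty := by
  rcases Set.eq_empty_or_nonempty s with h | h
  · exact absurd (h ▸ hs) Y.isPartition.1
  · exact h

/-- transpose of a relation -/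
def conv (s : Set (Ω × Ω)) : Set (Ω × Ω) := {p | (p.2, p.1) ∈ s}

lemma conv_mem {s : Set (Ω × Ω)} (hs : s ∈ Y.S) : conv s ∈ Y.S := Y.swap_mem s hs

@[simp] lemma mem_conv {s : Set (Ω × Ω)} {a b : Ω} : (a, b) ∈ conv s ↔ (b, a) ∈ s := Iff.rfl

@[simp] lemma conv_conv (s : Set (Ω × Ω)) : conv (conv s) = s := rfl

lemma conv_inj {s t : Set (Ω × Ω)} (h : conv s = conv t) : s = t := by
  have := congrArg conv h; simpa using this

/-- being a subset of the diagonal -/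
def IsDiag (s : Set (Ω × Ω)) : Prop := ∀ p ∈ s, (p : Ω × Ω).1 = p.2

lemma mem_diagRel_univ {p : Ω × Ω} : p ∈ diagRel (Set.univ : Set Ω) ↔ p.1 = p.2 := by
  simp [diagRel]

lemma isDiag_or_offdiag {s : Set (Ω × Ω)} (hs : s ∈ Y.S) :
    IsDiag s ∨ ∀ p ∈ s, (p : Ω × Ω).1 ≠ p.2 := by
  by_cases h : ∀ p ∈ s, (p : Ω × Ω).1 ≠ p.2
  · exact Or.inr h
  · push_neg at h
    obtain ⟨p, hp, hpd⟩ := h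
    obtain ⟨T, hTS, hT⟩ := Y.diag_isRelation
    have hpT : p ∈ ⋃₀ T := by rw [hT]; exact mem_diagRel_univ.2 hpd
    obtain ⟨t, htT, hpt⟩ := hpT
    have : s = t := rel_eq_of_mem hs (hTS htT) hp hpt
    left
    intro q hq
    have : q ∈ ⋃₀ T := ⟨t, htT, this ▸ hq⟩
    rw [hT] at this
    exact mem_diagRel_univ.1 this

lemma relOf_diag_isDiag (a : Ω) : IsDiag (relOf Y (a, a)) := by
  rcases isDiag_or_offdiag (relOf_mem Y (a, a)) with h | h
  · exact h
  · exact absurd rfl (h _ (mem_relOf Y (a, a)))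

lemma isDiag_of_diag_mem {s : Set (Ω × Ω)} (hs : s ∈ Y.S) {a : Ω} (ha : (a, a) ∈ s) :
    IsDiag s := by
  have := relOf_eq hs ha
  exact this ▸ relOf_diag_isDiag a

lemma conv_diag {s : Set (Ω × Ω)} (hd : IsDiag s) : conv s = s := by
  ext ⟨a, b⟩
  constructor
  · intro h; have := hd _ h; simp at this; subst this; exact h
  · intro h; have := hd _ h; simp at this; subst this; exact h

end Basic

end CC15
namespace CC15

open Set

set_option linter.unusedSectionVars false

attribute [local instance] Classical.propDecidable

section Count

variable {Ω : Type x} [Fintype Ω] {Y : CoherentConfiguration Ω}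

lemma ncard_pos_of_mem {s : Set Ω} {a : Ω} (h : a ∈ s) : 1 ≤ s.ncard := by
  have : s.Nonempty := ⟨a, h⟩
  exact this.ncard_pos (Set.toFinite s)

lemma interNum_pos {r s : Set (Ω × Ω)} {a b γ : Ω} (h1 : (a, γ) ∈ r) (h2 : (γ, b) ∈ s) :
    1 ≤ interNum r s (a, b) :=
  ncard_pos_of_mem (a := γ) ⟨h1, h2⟩

lemma interNum_const {r s t : Set (Ω × Ω)} (hr : r ∈ Y.S) (hs : s ∈ Y.S) (ht : t ∈ Y.S)
    {p q : Ω × Ω} (hp : p ∈ t) (hq : q ∈ t) : interNum r s p = interNum r s q :=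
  Y.coherent r hr s hs t ht p hp q hq

/-- interNum with a diagonal relation on the left. -/
lemma interNum_diag_left {d s : Set (Ω × Ω)} (hd : IsDiag d) (a b : Ω) :
    interNum d s (a, b) = if (a, a) ∈ d ∧ (a, b) ∈ s then 1 else 0 := by
  unfold interNum
  split_ifs with h
  · have : {γ : Ω | (a, γ) ∈ d ∧ (γ, b) ∈ s} = {a} := by
      ext γ
      simp only [Set.mem_setOf_eq, Set.mem_singleton_iff]
      constructor
      · rintro ⟨h1, _⟩; exact (hd _ h1).symm
      · rintro rfl; exact ⟨h.1, h.2⟩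
    rw [this, Set.ncard_singleton]
  · have : {γ : Ω | (a, γ) ∈ d ∧ (γ, b) ∈ s} = ∅ := by
      ext γ
      simp only [Set.mem_setOf_eq, Set.mem_empty_iff_false, iff_false]
      rintro ⟨h1, h2⟩
      have := hd _ h1; simp at this; subst this
      exact h ⟨h1, h2⟩
    rw [this, Set.ncard_empty]

lemma interNum_diag_right {d s : Set (Ω × Ω)} (hd : IsDiag d) (a b : Ω) :
    interNum s d (a, b) = if (b, b) ∈ d ∧ (a, b) ∈ s then 1 else 0 := by
  unfold interNum
  split_ifs with h
  · have : {γ : Ω | (a, γ) ∈ s ∧ (γ, b) ∈ d} = {b} := by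
      ext γ
      simp only [Set.mem_setOf_eq, Set.mem_singleton_iff]
      constructor
      · rintro ⟨_, h2⟩; exact hd _ h2
      · rintro rfl; exact ⟨h.2, h.1⟩
    rw [this, Set.ncard_singleton]
  · have : {γ : Ω | (a, γ) ∈ s ∧ (γ, b) ∈ d} = ∅ := by
      ext γ
      simp only [Set.mem_setOf_eq, Set.mem_empty_iff_false, iff_false]
      rintro ⟨h1, h2⟩
      have := hd _ h2; simp at this; subst this
      exact h ⟨h2, h1⟩
    rw [this, Set.ncard_empty]

/-- characterization of diagonal basis relations purely via intersection numbers. -/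
lemma isDiag_iff_char {s : Set (Ω × Ω)} (hs : s ∈ Y.S) :
    IsDiag s ↔ ∀ r ∈ Y.S, ∀ t ∈ Y.S, r ≠ t → ∀ p ∈ t, interNum s r p = 0 := by
  constructor
  · intro hd r hr t ht hrt p hp
    obtain ⟨a, b⟩ := p
    rw [interNum_diag_left hd]
    split_ifs with h
    · exact absurd (rel_eq_of_mem hr ht h.2 hp) hrt
    · rfl
  · intro H
    rcases isDiag_or_offdiag hs with h | h
    · exact h
    · exfalso
      obtain ⟨⟨a, b⟩, habs⟩ := rel_nonempty hs
      have hab : a ≠ b := h _ habs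
      set r := relOf Y (b, b) with hr
      have hrd : IsDiag r := relOf_diag_isDiag b
      have hrs : r ≠ s := by
        intro hh
        exact hab (hrd _ (hh ▸ habs))
      have h0 := H r (relOf_mem Y _) s hs hrs (a, b) habs
      have h1 : 1 ≤ interNum s r (a, b) := interNum_pos habs (mem_relOf Y (b, b))
      omega

end Count

end CC15
namespace CC15

open Set

set_option linter.unusedSectionVars false

attribute [local instance] Classical.propDecidable

section DvalN

variable {Ω : Type x} [Fintype Ω] {Y : CoherentConfiguration Ω}

lemma nonempty_of_one_le_interNum {r s : Set (Ω × Ω)} {p : Ω × Ω}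
    (h : 1 ≤ interNum r s p) : ∃ γ, (p.1, γ) ∈ r ∧ (γ, p.2) ∈ s := by
  have : {γ : Ω | (p.1, γ) ∈ r ∧ (γ, p.2) ∈ s}.Nonempty := by
    rw [Set.nonempty_iff_ne_empty]
    intro hh
    rw [interNum, hh, Set.ncard_empty] at h
    omega
  exact this

/-- characterization of the transpose via intersection numbers. -/
lemma conv_char {s t : Set (Ω × Ω)} (hs : s ∈ Y.S) (ht : t ∈ Y.S) :
    t = conv s ↔ ∃ d ∈ Y.S, IsDiag d ∧ ∃ p ∈ d, 1 ≤ interNum s t p := by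
  constructor
  · rintro rfl
    obtain ⟨⟨a, c⟩, hac⟩ := rel_nonempty hs
    exact ⟨relOf Y (a, a), relOf_mem Y _, relOf_diag_isDiag a, (a, a), mem_relOf Y _,
      interNum_pos hac (by simpa using hac)⟩
  · rintro ⟨d, _, hdd, ⟨a, b⟩, hpd, hpos⟩
    have hab : a = b := hdd _ hpd
    subst hab
    obtain ⟨γ, h1, h2⟩ := nonempty_of_one_le_interNum hpos
    exact rel_eq_of_mem ht (conv_mem hs) h2 (by simpa using h1)

lemma relOf_fst_const {s : Set (Ω × Ω)} (hs : s ∈ Y.S) {a b a' b' : Ω}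
    (h : (a, b) ∈ s) (h' : (a', b') ∈ s) : relOf Y (a, a) = relOf Y (a', a') := by
  set d := relOf Y (a, a) with hd
  have hdd : IsDiag d := relOf_diag_isDiag a
  have key : interNum d s (a, b) = interNum d s (a', b') :=
    interNum_const (relOf_mem Y _) hs hs h h'
  rw [interNum_diag_left hdd, interNum_diag_left hdd] at key
  rw [if_pos ⟨mem_relOf Y _, h⟩] at key
  by_cases hm : (a', a') ∈ d
  · exact (relOf_eq (relOf_mem Y (a, a)) hm).symm
  · rw [if_neg (fun hh => hm hh.1)] at key; omega

lemma relOf_snd_const {s : Set (Ω × Ω)} (hs : s ∈ Y.S) {a b a' b' : Ω}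
    (h : (a, b) ∈ s) (h' : (a', b') ∈ s) : relOf Y (b, b) = relOf Y (b', b') := by
  set d := relOf Y (b, b) with hd
  have hdd : IsDiag d := relOf_diag_isDiag b
  have key : interNum s d (a, b) = interNum s d (a', b') :=
    interNum_const hs (relOf_mem Y _) hs h h'
  rw [interNum_diag_right hdd, interNum_diag_right hdd] at key
  rw [if_pos ⟨mem_relOf Y _, h⟩] at key
  by_cases hm : (b', b') ∈ d
  · exact (relOf_eq (relOf_mem Y (b, b)) hm).symm
  · rw [if_neg (fun hh => hm hh.1)] at key; omega

variable (Y) in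
/-- the diagonal relation of the domain fiber of `s`. -/
noncomputable def dminus (s : Set (Ω × Ω)) : Set (Ω × Ω) :=
  if h : s.Nonempty then relOf Y (h.some.1, h.some.1) else ∅

variable (Y) in
/-- the diagonal relation of the range fiber of `s`. -/
noncomputable def dplus (s : Set (Ω × Ω)) : Set (Ω × Ω) :=
  if h : s.Nonempty then relOf Y (h.some.2, h.some.2) else ∅

lemma dminus_eq {s : Set (Ω × Ω)} (hs : s ∈ Y.S) {a b : Ω} (h : (a, b) ∈ s) :
    dminus Y s = relOf Y (a, a) := by
  have hne : s.Nonempty := ⟨_, h⟩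
  rw [dminus, dif_pos hne]
  exact relOf_fst_const hs (show (hne.some.1, hne.some.2) ∈ s from hne.some_mem) h

lemma dplus_eq {s : Set (Ω × Ω)} (hs : s ∈ Y.S) {a b : Ω} (h : (a, b) ∈ s) :
    dplus Y s = relOf Y (b, b) := by
  have hne : s.Nonempty := ⟨_, h⟩
  rw [dplus, dif_pos hne]
  exact relOf_snd_const hs (show (hne.some.1, hne.some.2) ∈ s from hne.some_mem) h

lemma dminus_mem_S {s : Set (Ω × Ω)} (hs : s ∈ Y.S) : dminus Y s ∈ Y.S := by
  obtain ⟨⟨a, b⟩, h⟩ := rel_nonempty hs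
  rw [dminus_eq hs h]; exact relOf_mem Y _

lemma dplus_mem_S {s : Set (Ω × Ω)} (hs : s ∈ Y.S) : dplus Y s ∈ Y.S := by
  obtain ⟨⟨a, b⟩, h⟩ := rel_nonempty hs
  rw [dplus_eq hs h]; exact relOf_mem Y _

lemma dminus_isDiag {s : Set (Ω × Ω)} (hs : s ∈ Y.S) : IsDiag (dminus Y s) := by
  obtain ⟨⟨a, b⟩, h⟩ := rel_nonempty hs
  rw [dminus_eq hs h]; exact relOf_diag_isDiag a

lemma dplus_isDiag {s : Set (Ω × Ω)} (hs : s ∈ Y.S) : IsDiag (dplus Y s) := by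
  obtain ⟨⟨a, b⟩, h⟩ := rel_nonempty hs
  rw [dplus_eq hs h]; exact relOf_diag_isDiag b

lemma mem_dminus {s : Set (Ω × Ω)} (hs : s ∈ Y.S) {a b : Ω} (h : (a, b) ∈ s) :
    (a, a) ∈ dminus Y s := by
  rw [dminus_eq hs h]; exact mem_relOf Y _

lemma mem_dplus {s : Set (Ω × Ω)} (hs : s ∈ Y.S) {a b : Ω} (h : (a, b) ∈ s) :
    (b, b) ∈ dplus Y s := by
  rw [dplus_eq hs h]; exact mem_relOf Y _

lemma outdeg_eq_interNum (s : Set (Ω × Ω)) (a : Ω) :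
    interNum s (conv s) (a, a) = {γ | (a, γ) ∈ s}.ncard := by
  unfold interNum
  congr 1
  ext γ
  simp [conv]

/-- the (out-)valency of a basis relation. -/
noncomputable def nval (s : Set (Ω × Ω)) : ℕ :=
  if h : s.Nonempty then {γ | (h.some.1, γ) ∈ s}.ncard else 0

lemma outdeg_const {s : Set (Ω × Ω)} (hs : s ∈ Y.S) {a : Ω} (ha : (a, a) ∈ dminus Y s) :
    {γ | (a, γ) ∈ s}.ncard = nval s := by
  have hne : s.Nonempty := rel_nonempty hs
  rw [nval, dif_pos hne]
  have h1 : (hne.some.1, hne.some.1) ∈ dminus Y s :=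
    mem_dminus hs (show (hne.some.1, hne.some.2) ∈ s from hne.some_mem)
  calc {γ | (a, γ) ∈ s}.ncard = interNum s (conv s) (a, a) := (outdeg_eq_interNum s a).symm
    _ = interNum s (conv s) (hne.some.1, hne.some.1) :=
        interNum_const hs (conv_mem hs) (dminus_mem_S hs) ha h1
    _ = {γ | (hne.some.1, γ) ∈ s}.ncard := outdeg_eq_interNum s _

lemma nval_pos {s : Set (Ω × Ω)} (hs : s ∈ Y.S) : 1 ≤ nval s := by
  have hne : s.Nonempty := rel_nonempty hs
  rw [nval, dif_pos hne]
  exact ncard_pos_of_mem (a := hne.some.2) (by simpa using hne.some_mem)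

lemma exists_out {s : Set (Ω × Ω)} (hs : s ∈ Y.S) {a : Ω} (ha : (a, a) ∈ dminus Y s) :
    ∃ γ, (a, γ) ∈ s := by
  have h1 : 1 ≤ {γ | (a, γ) ∈ s}.ncard := by
    rw [outdeg_const hs ha]; exact nval_pos hs
  have : {γ | (a, γ) ∈ s}.Nonempty := by
    rw [Set.nonempty_iff_ne_empty]
    intro hh; rw [hh, Set.ncard_empty] at h1; omega
  exact this

lemma mem_dminus_iff {s : Set (Ω × Ω)} (hs : s ∈ Y.S) {a : Ω} :
    (a, a) ∈ dminus Y s ↔ ∃ γ, (a, γ) ∈ s := by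
  constructor
  · exact exists_out hs
  · rintro ⟨γ, h⟩
    exact mem_dminus hs h

end DvalN

end CC15
namespace CC15

open Set

set_option linter.unusedSectionVars false

attribute [local instance] Classical.propDecidable

section Twin

variable {Ω : Type x} [Fintype Ω] {Y : CoherentConfiguration Ω}

lemma xtwin_refl (a : Ω) : XTwin Y a a := fun _ _ _ _ _ => Iff.rfl

lemma xtwin_symm {a b : Ω} (h : XTwin Y a b) : XTwin Y b a :=
  fun γ h1 h2 s hs => (h γ h2 h1 s hs).symm

lemma xtwin_left {a b : Ω} (h : XTwin Y a b) {γ : Ω} (h1 : γ ≠ a) (h2 : γ ≠ b)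
    {s : Set (Ω × Ω)} (hs : s ∈ Y.S) : (a, γ) ∈ s ↔ (b, γ) ∈ s := by
  have := h γ h1 h2 (conv s) (conv_mem hs)
  simpa using this

lemma offdiag_of_not_isDiag {s : Set (Ω × Ω)} (hs : s ∈ Y.S) (h : ¬ IsDiag s) :
    ∀ p ∈ s, (p : Ω × Ω).1 ≠ p.2 := by
  rcases isDiag_or_offdiag hs with h' | h'
  · exact absurd h' h
  · exact h'

variable (Y) in
/-- algebraic characterization of basis relations consisting of twin pairs -/
def twinChar (s : Set (Ω × Ω)) : Prop :=
  ∀ u ∈ Y.S, ∀ r ∈ Y.S, conv u ≠ r → ∀ p ∈ s,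
    interNum u r p = (if u = dminus Y s ∧ r = s then 1 else 0) +
      (if u = s ∧ r = dplus Y s then 1 else 0)

lemma twinChar_of_pair {s : Set (Ω × Ω)} (hs : s ∈ Y.S) (hoff : ¬ IsDiag s)
    {a b : Ω} (hab : (a, b) ∈ s) (htw : XTwin Y a b) : twinChar Y s := by
  intro u hu r hr hur p hp
  rw [interNum_const hu hr hs hp hab]
  have hab' : a ≠ b := offdiag_of_not_isDiag hs hoff _ hab
  have hG : {γ : Ω | (a, γ) ∈ u ∧ (γ, b) ∈ r} =
      (if u = dminus Y s ∧ r = s then {a} else (∅ : Set Ω)) ∪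
      (if u = s ∧ r = dplus Y s then {b} else ∅) := by
    ext γ
    simp only [Set.mem_setOf_eq, Set.mem_union]
    constructor
    · rintro ⟨hγu, hγr⟩
      by_cases hga : γ = a
      · subst hga
        have hu1 : u = dminus Y s := rel_eq_of_mem hu (dminus_mem_S hs) hγu (mem_dminus hs hab)
        have hr1 : r = s := rel_eq_of_mem hr hs hγr hab
        left; rw [if_pos ⟨hu1, hr1⟩]; exact rfl
      · by_cases hgb : γ = b
        · subst hgb
          have hu1 : u = s := rel_eq_of_mem hu hs hγu hab
          have hr1 : r = dplus Y s := rel_eq_of_mem hr (dplus_mem_S hs) hγr (mem_dplus hs hab)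
          right; rw [if_pos ⟨hu1, hr1⟩]; exact rfl
        · exfalso
          have hγa : (γ, a) ∈ r := (htw γ hga hgb r hr).2 hγr
          have : u = conv r := rel_eq_of_mem hu (conv_mem hr) hγu (by simpa using hγa)
          exact hur (by rw [this, conv_conv])
    · intro hmem
      rcases hmem with hm | hm
      · split_ifs at hm with hc
        · simp only [Set.mem_singleton_iff] at hm
          subst hm
          exact ⟨hc.1 ▸ mem_dminus hs hab, hc.2 ▸ hab⟩
        · exact absurd hm (Set.notMem_empty γ)
      · split_ifs at hm with hc
        · simp only [Set.mem_singleton_iff] at hm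
          subst hm
          exact ⟨hc.1 ▸ hab, hc.2 ▸ mem_dplus hs hab⟩
        · exact absurd hm (Set.notMem_empty γ)
  show {γ : Ω | (a, γ) ∈ u ∧ (γ, b) ∈ r}.ncard = _
  rw [hG]
  have hdOff : dminus Y s ≠ s := by
    intro hh
    exact hoff (hh ▸ dminus_isDiag hs)
  split_ifs with h1 h2 h2
  · exfalso; exact hdOff (h1.1.symm.trans h2.1)
  · simp
  · simp
  · simp

lemma pair_of_twinChar {s : Set (Ω × Ω)} (hs : s ∈ Y.S) (hch : twinChar Y s)
    {a b : Ω} (hab : (a, b) ∈ s) : XTwin Y a b := by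
  have key : ∀ γ, γ ≠ a → γ ≠ b → relOf Y (γ, a) = relOf Y (γ, b) := by
    intro γ h1 h2
    by_contra hne
    set t₁ := relOf Y (γ, a) with ht₁
    set t₂ := relOf Y (γ, b) with ht₂
    have hu : conv t₁ ∈ Y.S := conv_mem (relOf_mem Y _)
    have hcond : conv (conv t₁) ≠ t₂ := by rw [conv_conv]; exact hne
    have hkey := hch (conv t₁) hu t₂ (relOf_mem Y _) hcond (a, b) hab
    have hγ : 1 ≤ interNum (conv t₁) t₂ (a, b) :=
      interNum_pos (by simpa using mem_relOf Y (γ, a)) (mem_relOf Y (γ, b))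
    rw [hkey] at hγ
    split_ifs at hγ with hc1 hc2 hc2
    · have : IsDiag (conv t₁) := hc1.1 ▸ dminus_isDiag hs
      have := this (a, γ) (by simpa using mem_relOf Y (γ, a))
      exact h1 (by simpa using this.symm)
    · have : IsDiag (conv t₁) := hc1.1 ▸ dminus_isDiag hs
      have := this (a, γ) (by simpa using mem_relOf Y (γ, a))
      exact h1 (by simpa using this.symm)
    · have : IsDiag t₂ := hc2.2 ▸ dplus_isDiag hs
      have := this (γ, b) (mem_relOf Y (γ, b))
      exact h2 this
    · omega
  intro γ h1 h2 s' hs'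
  constructor
  · intro h
    have : s' = relOf Y (γ, a) := (relOf_eq hs' h).symm
    rw [this, key γ h1 h2]
    exact mem_relOf Y _
  · intro h
    have : s' = relOf Y (γ, b) := (relOf_eq hs' h).symm
    rw [this, ← key γ h1 h2]
    exact mem_relOf Y _

lemma xtwin_trans {a b c : Ω} (hab : XTwin Y a b) (hbc : XTwin Y b c) : XTwin Y a c := by
  by_cases h1 : a = b
  · exact h1 ▸ hbc
  by_cases h2 : b = c
  · exact h2 ▸ hab
  by_cases h3 : a = c
  · exact h3 ▸ xtwin_refl a
  set s := relOf Y (a, b) with hsd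
  have hs : s ∈ Y.S := relOf_mem Y _
  have hmem : (a, b) ∈ s := mem_relOf Y _
  have hoff : ¬ IsDiag s := fun hd => h1 (hd _ hmem)
  have hch : twinChar Y s := twinChar_of_pair hs hoff hmem hab
  have hac : (a, c) ∈ s := (hbc a h1 h3 s hs).1 hmem
  exact pair_of_twinChar hs hch hac

lemma xtwin_equivalence : Equivalence (XTwin Y) :=
  ⟨xtwin_refl, xtwin_symm, xtwin_trans⟩

end Twin

end CC15
namespace CC15

open Set

set_option linter.unusedSectionVars false

attribute [local instance] Classical.propDecidable

section Struct

variable {Ω : Type x} [Fintype Ω] {Y : CoherentConfiguration Ω}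

variable (Y) in
/-- "twins lie in the same fiber" -/
def HTF : Prop := ∀ a b : Ω, XTwin Y a b → relOf Y (a, a) = relOf Y (b, b)

variable (Y) in
/-- the obstruction to HTF, stated invariantly -/
def BadCC : Prop := ∃ s ∈ Y.S, ¬ IsDiag s ∧ twinChar Y s ∧ dminus Y s ≠ dplus Y s

lemma htf_of_not_bad (h : ¬ BadCC Y) : HTF Y := by
  intro a b htw
  by_cases hab : a = b
  · rw [hab]
  set s := relOf Y (a, b) with hsd
  have hs : s ∈ Y.S := relOf_mem Y _
  have hmem : (a, b) ∈ s := mem_relOf Y _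
  have hoff : ¬ IsDiag s := fun hd => hab (hd _ hmem)
  have hch : twinChar Y s := twinChar_of_pair hs hoff hmem htw
  have : dminus Y s = dplus Y s := by
    by_contra hne
    exact h ⟨s, hs, hoff, hch, hne⟩
  rw [← dminus_eq hs hmem, ← dplus_eq hs hmem] at *
  exact this

lemma bad_elim (hhtf : HTF Y) (hbad : BadCC Y) : False := by
  obtain ⟨s, hs, hoff, hch, hne⟩ := hbad
  obtain ⟨⟨a, b⟩, hab⟩ := rel_nonempty hs
  have htw : XTwin Y a b := pair_of_twinChar hs hch hab
  exact hne ((dminus_eq hs hab).trans ((hhtf a b htw).trans (dplus_eq hs hab).symm))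

lemma twin_mem_symm (hhtf : HTF Y) {a b : Ω} (htw : XTwin Y a b) {s : Set (Ω × Ω)}
    (hs : s ∈ Y.S) (hab : (a, b) ∈ s) : (b, a) ∈ s := by
  by_cases hab' : a = b
  · exact hab' ▸ hab
  have hoff : ¬ IsDiag s := fun hd => hab' (hd _ hab)
  have hbd : (b, b) ∈ dminus Y s := by
    rw [dminus_eq hs hab, hhtf a b htw]
    exact mem_relOf Y _
  have hka : {γ | (a, γ) ∈ s}.ncard = nval s := outdeg_const hs (mem_dminus hs hab)
  have hkb : {γ | (b, γ) ∈ s}.ncard = nval s := outdeg_const hs hbd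
  by_contra hba
  have hsub : {γ | (b, γ) ∈ s} = {γ | (a, γ) ∈ s} \ {b} := by
    ext γ
    simp only [Set.mem_setOf_eq, Set.mem_diff, Set.mem_singleton_iff]
    constructor
    · intro h
      have hγb : γ ≠ b := fun hh => (offdiag_of_not_isDiag hs hoff _ h) hh.symm
      have hγa : γ ≠ a := fun hh => hba (hh ▸ h)
      exact ⟨(xtwin_left htw hγa hγb hs).2 h, hγb⟩
    · rintro ⟨h, hγb⟩
      have hγa : γ ≠ a := fun hh => offdiag_of_not_isDiag hs hoff _ h (by rw [hh])
      exact (xtwin_left htw hγa hγb hs).1 h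
  have hbmem : b ∈ {γ | (a, γ) ∈ s} := hab
  have : ({γ | (a, γ) ∈ s} \ {b}).ncard = {γ | (a, γ) ∈ s}.ncard - 1 :=
    Set.ncard_diff_singleton_of_mem hbmem
  have hpos : 1 ≤ nval s := nval_pos hs
  rw [hsub, this, hka] at hkb
  omega

/-- all off-diagonal pairs inside one twin class belong to the same basis relation -/
lemma within_class_rel (hhtf : HTF Y) {a b c d : Ω} (hab : XTwin Y a b) (hac : XTwin Y a c)
    (had : XTwin Y a d) (h1 : a ≠ b) (h2 : c ≠ d) : (c, d) ∈ relOf Y (a, b) := by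
  set s := relOf Y (a, b) with hsd
  have hs : s ∈ Y.S := relOf_mem Y _
  have hmem : (a, b) ∈ s := mem_relOf Y _
  have hbd : XTwin Y b d := xtwin_trans (xtwin_symm hab) had
  have hbc : XTwin Y b c := xtwin_trans (xtwin_symm hab) hac
  have hcd : XTwin Y c d := xtwin_trans (xtwin_symm hac) had
  by_cases hcb : c = b
  · subst hcb
    by_cases hda : d = a
    · subst hda
      exact twin_mem_symm hhtf hab hs hmem
    · have h3 : (a, d) ∈ s := (hcd a h1 (fun h => hda h.symm) s hs).1 hmem
      have h4 : d ≠ a := fun h => hda h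
      exact (xtwin_left hab h4 (Ne.symm h2) hs).1 h3
  · have h3 : (c, b) ∈ s := (xtwin_left hac (Ne.symm h1) (fun h => hcb h.symm) hs).1 hmem
    exact (hbd c hcb h2 s hs).1 h3

def Fib (d : Set (Ω × Ω)) : Set Ω := {x | (x, x) ∈ d}

variable (Y) in
def cls (a : Ω) : Set Ω := {b | XTwin Y a b}

lemma mem_cls_self (a : Ω) : a ∈ cls Y a := xtwin_refl a

lemma cls_eq_of_twin {a b : Ω} (h : XTwin Y a b) : cls Y a = cls Y b := by
  ext c
  exact ⟨fun hc => xtwin_trans (xtwin_symm h) hc, fun hc => xtwin_trans h hc⟩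

/-- structure of a nondiagonal twin basis relation -/
lemma etype_offdiag_struct (hhtf : HTF Y) {s : Set (Ω × Ω)} (hs : s ∈ Y.S)
    (hoff : ¬ IsDiag s) (hch : twinChar Y s) :
    s = {p : Ω × Ω | p.1 ≠ p.2 ∧ XTwin Y p.1 p.2 ∧ (p.1, p.1) ∈ dminus Y s} := by
  ext ⟨x, y⟩
  simp only [Set.mem_setOf_eq]
  constructor
  · intro h
    exact ⟨offdiag_of_not_isDiag hs hoff _ h, pair_of_twinChar hs hch h, mem_dminus hs h⟩
  · rintro ⟨hxy, htw, hxd⟩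
    obtain ⟨γ, hγ⟩ := exists_out hs hxd
    have hxγ : x ≠ γ := offdiag_of_not_isDiag hs hoff _ hγ
    have htγ : XTwin Y x γ := pair_of_twinChar hs hch hγ
    have := within_class_rel hhtf (a := x) (b := γ) (c := x) (d := y)
      htγ (xtwin_refl x) htw hxγ hxy
    rwa [relOf_eq hs hγ] at this

lemma etype_offdiag_unique (hhtf : HTF Y) {s s' : Set (Ω × Ω)} (hs : s ∈ Y.S)
    (hs' : s' ∈ Y.S) (hoff : ¬ IsDiag s) (hoff' : ¬ IsDiag s') (hch : twinChar Y s)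
    (hch' : twinChar Y s') (hd : dminus Y s = dminus Y s') : s = s' := by
  rw [etype_offdiag_struct hhtf hs hoff hch, etype_offdiag_struct hhtf hs' hoff' hch', hd]

variable (Y) in
/-- the common size of the twin classes inside the fiber of a diagonal relation `d` -/
noncomputable def mval (d : Set (Ω × Ω)) : ℕ :=
  if h : ∃ s ∈ Y.S, ¬ IsDiag s ∧ twinChar Y s ∧ dminus Y s = d then
    1 + nval h.choose else 1

lemma mval_pos (d : Set (Ω × Ω)) : 1 ≤ mval Y d := by
  rw [mval]; split_ifs <;> omega

lemma class_card (hhtf : HTF Y) (a : Ω) : (cls Y a).ncard = mval Y (relOf Y (a, a)) := by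
  set d := relOf Y (a, a) with hdd
  rw [mval]
  split_ifs with h
  · obtain ⟨hsS, hoff, hch, hdm⟩ := h.choose_spec
    set s := h.choose with hsd
    have hcls : cls Y a = insert a {γ | (a, γ) ∈ s} := by
      ext b
      simp only [cls, Set.mem_setOf_eq, Set.mem_insert_iff]
      constructor
      · intro htw
        by_cases hb : b = a
        · exact Or.inl hb
        · right
          have : (a, b) ∈ {p : Ω × Ω | p.1 ≠ p.2 ∧ XTwin Y p.1 p.2 ∧ (p.1, p.1) ∈ dminus Y s} := by
            refine ⟨fun hh => hb hh.symm, htw, ?_⟩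
            rw [hdm]
            exact mem_relOf Y _
          rw [← etype_offdiag_struct hhtf hsS hoff hch] at this
          exact this
      · rintro (rfl | hb)
        · exact xtwin_refl _
        · exact pair_of_twinChar hsS hch hb
    have hnm : a ∉ {γ | (a, γ) ∈ s} := fun hmem => (offdiag_of_not_isDiag hsS hoff _ hmem) rfl
    have had : (a, a) ∈ dminus Y s := by rw [hdm]; exact mem_relOf Y _
    rw [hcls, Set.ncard_insert_of_notMem hnm (Set.toFinite _), outdeg_const hsS had]
    omega
  · have hcls : cls Y a = {a} := by
      ext b
      simp only [cls, Set.mem_setOf_eq, Set.mem_singleton_iff]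
      constructor
      · intro htw
        by_contra hb
        have hab : a ≠ b := fun hh => hb hh.symm
        refine h ⟨relOf Y (a, b), relOf_mem Y _, fun hd' => hab (hd' _ (mem_relOf Y _)), ?_, ?_⟩
        · exact twinChar_of_pair (relOf_mem Y _) (fun hd' => hab (hd' _ (mem_relOf Y _)))
            (mem_relOf Y _) htw
        · exact dminus_eq (relOf_mem Y _) (mem_relOf Y _)
      · rintro rfl; exact xtwin_refl _
    rw [hcls, Set.ncard_singleton]

lemma class_sub_fib (hhtf : HTF Y) {a b : Ω} (h : b ∈ cls Y a) :
    b ∈ Fib (relOf Y (a, a)) := by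
  show (b, b) ∈ relOf Y (a, a)
  rw [hhtf a b h]
  exact mem_relOf Y _

end Struct

end CC15
namespace CC15

open Set

set_option linter.unusedSectionVars false

attribute [local instance] Classical.propDecidable

section QuotSide

variable {Ω : Type x} [Fintype Ω] {Y : CoherentConfiguration Ω}

lemma diagRel_inj {α : Type y} {A B : Set α} (h : diagRel A = diagRel B) : A = B := by
  ext a
  constructor <;> intro ha
  · have h1 : ((a, a) : α × α) ∈ diagRel A := ⟨rfl, ha⟩
    rw [h] at h1
    exact h1.2
  · have h1 : ((a, a) : α × α) ∈ diagRel B := ⟨rfl, ha⟩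
    rw [← h] at h1
    exact h1.2

variable (Y) in
def qmap : Ω → Quot (XTwin Y) := Quot.mk (XTwin Y)

lemma qmap_eq_iff {a b : Ω} : qmap Y a = qmap Y b ↔ XTwin Y a b := by
  rw [qmap, Quot.eq]
  exact xtwin_equivalence.eqvGen_iff

variable (Y) in
def qset (q : Quot (XTwin Y)) : Set Ω := {x | qmap Y x = q}

lemma qset_qmap (a : Ω) : qset Y (qmap Y a) = cls Y a := by
  ext x
  simp only [qset, Set.mem_setOf_eq, cls]
  rw [qmap_eq_iff]
  exact ⟨fun h => xtwin_symm h, fun h => xtwin_symm h⟩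

lemma mem_qset_self (a : Ω) : a ∈ qset Y (qmap Y a) := rfl

lemma qset_nonempty (q : Quot (XTwin Y)) : (qset Y q).Nonempty := by
  induction q using Quot.ind with
  | _ a => exact ⟨a, rfl⟩

lemma qset_disjoint {q q' : Quot (XTwin Y)} (h : q ≠ q') {x : Ω}
    (h1 : x ∈ qset Y q) (h2 : x ∈ qset Y q') : False := h (h1.symm.trans h2)

variable (Y) in
def rho (s : Set (Ω × Ω)) : Set (Quot (XTwin Y) × Quot (XTwin Y)) :=
  Prod.map (qmap Y) (qmap Y) '' s

lemma mem_rho_of_mem {s : Set (Ω × Ω)} {x y : Ω} (h : (x, y) ∈ s) :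
    (qmap Y x, qmap Y y) ∈ rho Y s := ⟨(x, y), h, rfl⟩

variable (Y) in
/-- `s` is an e-type relation: a subset of the twin parabolic -/
def EType (s : Set (Ω × Ω)) : Prop := IsDiag s ∨ twinChar Y s

variable (Y) in
/-- a cross relation is disjoint from the twin parabolic -/
def Cross (s : Set (Ω × Ω)) : Prop := ¬ IsDiag s ∧ ¬ twinChar Y s

lemma not_twin_of_cross {s : Set (Ω × Ω)} (hs : s ∈ Y.S) (hc : Cross Y s) {x y : Ω}
    (h : (x, y) ∈ s) : ¬ XTwin Y x y :=
  fun htw => hc.2 (twinChar_of_pair hs hc.1 h htw)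

lemma cross_block {s : Set (Ω × Ω)} (hs : s ∈ Y.S) (hc : Cross Y s) {a b x y : Ω}
    (hab : (a, b) ∈ s) (hx : XTwin Y a x) (hy : XTwin Y b y) : (x, y) ∈ s := by
  have hnab : ¬ XTwin Y a b := not_twin_of_cross hs hc hab
  have hab' : a ≠ b := fun h => hnab (h ▸ xtwin_refl a)
  have hay' : a ≠ y := fun h => hnab (xtwin_symm (h ▸ hy))
  have hay : (a, y) ∈ s := (hy a hab' hay' s hs).1 hab
  have hyx : y ≠ x := by
    intro h
    subst h
    exact hnab (xtwin_trans hx (xtwin_symm hy))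
  have hya : y ≠ a := fun h => hay' h.symm
  exact (xtwin_left hx hya hyx hs).1 hay

lemma rho_cross_iff {s : Set (Ω × Ω)} (hs : s ∈ Y.S) (hc : Cross Y s) {x y : Ω} :
    (qmap Y x, qmap Y y) ∈ rho Y s ↔ (x, y) ∈ s := by
  constructor
  · rintro ⟨⟨a, b⟩, hab, hq⟩
    simp only [Prod.map, Prod.mk.injEq] at hq
    exact cross_block hs hc hab (qmap_eq_iff.1 hq.1) (qmap_eq_iff.1 hq.2)
  · exact mem_rho_of_mem

lemma rho_cross_ne {s : Set (Ω × Ω)} (hs : s ∈ Y.S) (hc : Cross Y s) {q1 q2 : Quot (XTwin Y)}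
    (h : (q1, q2) ∈ rho Y s) : q1 ≠ q2 := by
  obtain ⟨⟨a, b⟩, hab, hq⟩ := h
  simp only [Prod.map, Prod.mk.injEq] at hq
  rw [← hq.1, ← hq.2]
  intro hh
  exact not_twin_of_cross hs hc hab (qmap_eq_iff.1 hh)

variable (Y) in
noncomputable def dhat (s : Set (Ω × Ω)) : Set (Ω × Ω) :=
  if IsDiag s then s else dminus Y s

lemma dhat_mem_S {s : Set (Ω × Ω)} (hs : s ∈ Y.S) : dhat Y s ∈ Y.S := by
  rw [dhat]; split_ifs
  · exact hs
  · exact dminus_mem_S hs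

lemma dhat_isDiag {s : Set (Ω × Ω)} (hs : s ∈ Y.S) : IsDiag (dhat Y s) := by
  rw [dhat]; split_ifs with h
  · exact h
  · exact dminus_isDiag hs

lemma rho_etype_eq (hhtf : HTF Y) {s : Set (Ω × Ω)} (hs : s ∈ Y.S) (he : EType Y s) :
    rho Y s = diagRel (qmap Y '' Fib (dhat Y s)) := by
  by_cases hd : IsDiag s
  · rw [dhat, if_pos hd]
    ext ⟨q1, q2⟩
    constructor
    · rintro ⟨⟨a, b⟩, hab, hq⟩
      have : a = b := hd _ hab
      subst this
      simp only [Prod.map, Prod.mk.injEq] at hq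
      exact ⟨hq.1.symm.trans hq.2, ⟨a, hab, hq.1⟩⟩
    · rintro ⟨heq, a, haf, hq⟩
      exact ⟨(a, a), haf, Prod.ext hq (hq.trans heq)⟩
  · have hch : twinChar Y s := he.resolve_left hd
    rw [dhat, if_neg hd]
    ext ⟨q1, q2⟩
    constructor
    · rintro ⟨⟨a, b⟩, hab, hq⟩
      simp only [Prod.map, Prod.mk.injEq] at hq
      have htw : XTwin Y a b := pair_of_twinChar hs hch hab
      refine ⟨?_, a, mem_dminus hs hab, hq.1⟩
      rw [← hq.1, ← hq.2]
      exact qmap_eq_iff.2 htw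
    · rintro ⟨heq, a, haf, hq⟩
      obtain ⟨γ, hγ⟩ := exists_out hs haf
      have hγa : qmap Y γ = qmap Y a := qmap_eq_iff.2 (xtwin_symm (pair_of_twinChar hs hch hγ))
      exact ⟨(a, γ), hγ, Prod.ext hq (hγa.trans (hq.trans heq))⟩

lemma rho_etype_diag (hhtf : HTF Y) {s : Set (Ω × Ω)} (hs : s ∈ Y.S) (he : EType Y s)
    {q1 q2 : Quot (XTwin Y)} (h : (q1, q2) ∈ rho Y s) : q1 = q2 := by
  rw [rho_etype_eq hhtf hs he] at h
  exact h.1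

lemma fib_eq_dhat_of_etype (hhtf : HTF Y) {s t : Set (Ω × Ω)} (hs : s ∈ Y.S) (ht : t ∈ Y.S)
    (hes : EType Y s) (het : EType Y t)
    (h : qmap Y '' Fib (dhat Y s) = qmap Y '' Fib (dhat Y t)) : dhat Y s = dhat Y t := by
  have key : ∀ x, x ∈ Fib (dhat Y s) → x ∈ Fib (dhat Y t) := by
    intro x hx
    have : qmap Y x ∈ qmap Y '' Fib (dhat Y t) := h ▸ ⟨x, hx, rfl⟩
    obtain ⟨x', hx', hq⟩ := this
    have htw : XTwin Y x' x := qmap_eq_iff.1 hq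
    have : relOf Y (x', x') = relOf Y (x, x) := hhtf x' x htw
    have hd' : relOf Y (x', x') = dhat Y t := relOf_eq (dhat_mem_S ht) hx'
    show (x, x) ∈ dhat Y t
    rw [← hd', this]
    exact mem_relOf Y _
  obtain ⟨⟨a, b⟩, hab⟩ := rel_nonempty (dhat_mem_S hs)
  have hab' : a = b := dhat_isDiag hs _ hab
  subst hab'
  exact rel_eq_of_mem (dhat_mem_S hs) (dhat_mem_S ht) hab (key a hab)

/-- when two basis relations have the same quotient image -/
lemma rho_eq_iff (hhtf : HTF Y) {s t : Set (Ω × Ω)} (hs : s ∈ Y.S) (ht : t ∈ Y.S) :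
    rho Y s = rho Y t ↔ (s = t ∨ (EType Y s ∧ EType Y t ∧ dhat Y s = dhat Y t)) := by
  constructor
  · intro h
    by_cases hes : EType Y s
    · have het : EType Y t := by
        by_contra hct
        have hct' : Cross Y t := ⟨fun hh => hct (Or.inl hh), fun hh => hct (Or.inr hh)⟩
        obtain ⟨⟨a, b⟩, hab⟩ := rel_nonempty ht
        have := rho_etype_diag hhtf hs hes (h ▸ mem_rho_of_mem hab)
        exact rho_cross_ne ht hct' (mem_rho_of_mem hab) this
      right
      refine ⟨hes, het, fib_eq_dhat_of_etype hhtf hs ht hes het ?_⟩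
      have h1 := rho_etype_eq hhtf hs hes
      have h2 := rho_etype_eq hhtf ht het
      rw [h, h2] at h1
      exact (diagRel_inj h1).symm
    · have hcs : Cross Y s := ⟨fun hh => hes (Or.inl hh), fun hh => hes (Or.inr hh)⟩
      left
      have het : Cross Y t := by
        by_contra hct
        have het' : EType Y t := by
          by_cases h1 : IsDiag t
          · exact Or.inl h1
          · by_cases h2 : twinChar Y t
            · exact Or.inr h2
            · exact absurd ⟨h1, h2⟩ hct
        obtain ⟨⟨a, b⟩, hab⟩ := rel_nonempty hs
        have := rho_etype_diag hhtf ht het' (h ▸ mem_rho_of_mem hab)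
        exact rho_cross_ne hs hcs (mem_rho_of_mem hab) this
      obtain ⟨⟨a, b⟩, hab⟩ := rel_nonempty hs
      have : (qmap Y a, qmap Y b) ∈ rho Y t := h ▸ mem_rho_of_mem hab
      have hmem : (a, b) ∈ t := (rho_cross_iff ht het).1 this
      exact rel_eq_of_mem hs ht hab hmem
  · rintro (rfl | ⟨hes, het, hd⟩)
    · rfl
    · rw [rho_etype_eq hhtf hs hes, rho_etype_eq hhtf ht het, hd]

end QuotSide

end CC15
namespace CC15

open Set

set_option linter.unusedSectionVars false
set_option linter.unusedVariables false

attribute [local instance] Classical.propDecidable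

section QuotCount

variable {Ω : Type x} [Fintype Ω] {Y : CoherentConfiguration Ω}

lemma finiteQuot : Finite (Quot (XTwin Y)) :=
  Finite.of_surjective (qmap Y) (fun q => Quot.exists_rep q)

lemma qset_card (hhtf : HTF Y) (γ : Ω) :
    (qset Y (qmap Y γ)).ncard = mval Y (relOf Y (γ, γ)) := by
  rw [qset_qmap, class_card hhtf]

lemma mem_image_qmap_fib (hhtf : HTF Y) {d : Set (Ω × Ω)} (hd : d ∈ Y.S) (hdd : IsDiag d)
    {α : Ω} : qmap Y α ∈ qmap Y '' Fib d ↔ (α, α) ∈ d := by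
  constructor
  · rintro ⟨x, hx, hq⟩
    have htw : XTwin Y x α := qmap_eq_iff.1 hq
    have h1 : relOf Y (x, x) = relOf Y (α, α) := hhtf x α htw
    have h2 : relOf Y (x, x) = d := relOf_eq hd hx
    show (α, α) ∈ d
    rw [← h2, h1]
    exact mem_relOf Y _
  · intro h
    exact ⟨α, h, rfl⟩

lemma rho_etype_mem_iff (hhtf : HTF Y) {s : Set (Ω × Ω)} (hs : s ∈ Y.S) (he : EType Y s)
    {α : Ω} {θ : Quot (XTwin Y)} :
    (qmap Y α, θ) ∈ rho Y s ↔ θ = qmap Y α ∧ (α, α) ∈ dhat Y s := by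
  rw [rho_etype_eq hhtf hs he]
  constructor
  · rintro ⟨h1, h2⟩
    refine ⟨h1.symm, ?_⟩
    exact (mem_image_qmap_fib hhtf (dhat_mem_S hs) (dhat_isDiag hs)).1 h2
  · rintro ⟨h1, h2⟩
    exact ⟨h1.symm, (mem_image_qmap_fib hhtf (dhat_mem_S hs) (dhat_isDiag hs)).2 h2⟩

lemma rho_etype_mem_iff' (hhtf : HTF Y) {s : Set (Ω × Ω)} (hs : s ∈ Y.S) (he : EType Y s)
    {β : Ω} {θ : Quot (XTwin Y)} :
    (θ, qmap Y β) ∈ rho Y s ↔ θ = qmap Y β ∧ (β, β) ∈ dhat Y s := by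
  constructor
  · intro h
    have heq : θ = qmap Y β := (rho_etype_diag hhtf hs he h)
    subst heq
    exact ⟨rfl, ((rho_etype_mem_iff hhtf hs he).1 h).2⟩
  · rintro ⟨h1, h2⟩
    subst h1
    exact (rho_etype_mem_iff hhtf hs he).2 ⟨rfl, h2⟩

/-- quotient intersection number: both relations of e-type -/
lemma quotNum_ee (hhtf : HTF Y) {r₁ r₂ : Set (Ω × Ω)} (hr₁ : r₁ ∈ Y.S) (he₁ : EType Y r₁)
    (hr₂ : r₂ ∈ Y.S) (he₂ : EType Y r₂) (α β : Ω) :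
    interNum (rho Y r₁) (rho Y r₂) (qmap Y α, qmap Y β) =
      if qmap Y α = qmap Y β ∧ (α, α) ∈ dhat Y r₁ ∧ (α, α) ∈ dhat Y r₂ then 1 else 0 := by
  show {θ | (qmap Y α, θ) ∈ rho Y r₁ ∧ (θ, qmap Y β) ∈ rho Y r₂}.ncard = _
  split_ifs with hcond
  · have : {θ | (qmap Y α, θ) ∈ rho Y r₁ ∧ (θ, qmap Y β) ∈ rho Y r₂} = {qmap Y α} := by
      ext θ
      simp only [Set.mem_setOf_eq, Set.mem_singleton_iff]
      rw [rho_etype_mem_iff hhtf hr₁ he₁, rho_etype_mem_iff' hhtf hr₂ he₂]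
      constructor
      · rintro ⟨⟨h1, _⟩, _⟩; exact h1
      · rintro rfl
        refine ⟨⟨rfl, hcond.2.1⟩, hcond.1, ?_⟩
        have htw : XTwin Y α β := qmap_eq_iff.1 hcond.1
        have h5 : relOf Y (α, α) = relOf Y (β, β) := hhtf α β htw
        have h2 : relOf Y (α, α) = dhat Y r₂ := relOf_eq (dhat_mem_S hr₂) hcond.2.2
        show (β, β) ∈ dhat Y r₂
        rw [← h2, h5]
        exact mem_relOf Y _
    rw [this, Set.ncard_singleton]
  · have : {θ | (qmap Y α, θ) ∈ rho Y r₁ ∧ (θ, qmap Y β) ∈ rho Y r₂} = ∅ := by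
      ext θ
      simp only [Set.mem_setOf_eq, Set.mem_empty_iff_false, iff_false]
      rw [rho_etype_mem_iff hhtf hr₁ he₁, rho_etype_mem_iff' hhtf hr₂ he₂]
      rintro ⟨⟨h1, h2⟩, h3, h4⟩
      have hq : qmap Y α = qmap Y β := h1.symm.trans h3
      have htw : XTwin Y α β := qmap_eq_iff.1 hq
      have h5 : relOf Y (α, α) = relOf Y (β, β) := hhtf α β htw
      have h6 : relOf Y (β, β) = dhat Y r₂ := relOf_eq (dhat_mem_S hr₂) h4
      refine hcond ⟨hq, h2, ?_⟩
      rw [← h6, ← h5]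
      exact mem_relOf Y _
    rw [this, Set.ncard_empty]

/-- quotient intersection number: e-type and cross -/
lemma quotNum_ec (hhtf : HTF Y) {r₁ r₂ : Set (Ω × Ω)} (hr₁ : r₁ ∈ Y.S) (he₁ : EType Y r₁)
    (hr₂ : r₂ ∈ Y.S) (hc₂ : Cross Y r₂) (α β : Ω) :
    interNum (rho Y r₁) (rho Y r₂) (qmap Y α, qmap Y β) =
      if (α, α) ∈ dhat Y r₁ ∧ (α, β) ∈ r₂ then 1 else 0 := by
  show {θ | (qmap Y α, θ) ∈ rho Y r₁ ∧ (θ, qmap Y β) ∈ rho Y r₂}.ncard = _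
  have hset : {θ | (qmap Y α, θ) ∈ rho Y r₁ ∧ (θ, qmap Y β) ∈ rho Y r₂} =
      if (α, α) ∈ dhat Y r₁ ∧ (α, β) ∈ r₂ then {qmap Y α} else ∅ := by
    ext θ
    simp only [Set.mem_setOf_eq]
    rw [rho_etype_mem_iff hhtf hr₁ he₁]
    split_ifs with hcond
    · simp only [Set.mem_singleton_iff]
      constructor
      · rintro ⟨⟨h1, _⟩, _⟩; exact h1
      · rintro rfl
        exact ⟨⟨rfl, hcond.1⟩, mem_rho_of_mem hcond.2⟩
    · simp only [Set.mem_empty_iff_false, iff_false]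
      rintro ⟨⟨h1, h2⟩, h3⟩
      subst h1
      exact hcond ⟨h2, (rho_cross_iff hr₂ hc₂).1 h3⟩
  rw [hset]
  split_ifs
  · exact Set.ncard_singleton _
  · exact Set.ncard_empty _

/-- quotient intersection number: cross and e-type -/
lemma quotNum_ce (hhtf : HTF Y) {r₁ r₂ : Set (Ω × Ω)} (hr₁ : r₁ ∈ Y.S) (hc₁ : Cross Y r₁)
    (hr₂ : r₂ ∈ Y.S) (he₂ : EType Y r₂) (α β : Ω) :
    interNum (rho Y r₁) (rho Y r₂) (qmap Y α, qmap Y β) =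
      if (α, β) ∈ r₁ ∧ (β, β) ∈ dhat Y r₂ then 1 else 0 := by
  show {θ | (qmap Y α, θ) ∈ rho Y r₁ ∧ (θ, qmap Y β) ∈ rho Y r₂}.ncard = _
  have hset : {θ | (qmap Y α, θ) ∈ rho Y r₁ ∧ (θ, qmap Y β) ∈ rho Y r₂} =
      if (α, β) ∈ r₁ ∧ (β, β) ∈ dhat Y r₂ then {qmap Y β} else ∅ := by
    ext θ
    simp only [Set.mem_setOf_eq]
    rw [rho_etype_mem_iff' hhtf hr₂ he₂]
    split_ifs with hcond
    · simp only [Set.mem_singleton_iff]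
      constructor
      · rintro ⟨_, h1, _⟩; exact h1
      · rintro rfl
        exact ⟨mem_rho_of_mem hcond.1, rfl, hcond.2⟩
    · simp only [Set.mem_empty_iff_false, iff_false]
      rintro ⟨h3, h1, h2⟩
      subst h1
      exact hcond ⟨(rho_cross_iff hr₁ hc₁).1 h3, h2⟩
  rw [hset]
  split_ifs
  · exact Set.ncard_singleton _
  · exact Set.ncard_empty _

/-- quotient intersection number: both relations cross -/
lemma quotNum_cc (hhtf : HTF Y) {r₁ r₂ : Set (Ω × Ω)} (hr₁ : r₁ ∈ Y.S) (hc₁ : Cross Y r₁)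
    (hr₂ : r₂ ∈ Y.S) (hc₂ : Cross Y r₂) (α β : Ω) :
    interNum (rho Y r₁) (rho Y r₂) (qmap Y α, qmap Y β) * mval Y (dplus Y r₁) =
      interNum r₁ r₂ (α, β) := by
  haveI : Finite (Quot (XTwin Y)) := finiteQuot
  haveI : Fintype (Quot (XTwin Y)) := Fintype.ofFinite _
  set Θ : Set (Quot (XTwin Y)) :=
    {θ | (qmap Y α, θ) ∈ rho Y r₁ ∧ (θ, qmap Y β) ∈ rho Y r₂} with hΘ
  have hiff : ∀ θ γ, γ ∈ qset Y θ → (θ ∈ Θ ↔ ((α, γ) ∈ r₁ ∧ (γ, β) ∈ r₂)) := by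
    intro θ γ hγ
    have hγθ : qmap Y γ = θ := hγ
    subst hγθ
    rw [hΘ]
    simp only [Set.mem_setOf_eq]
    rw [rho_cross_iff hr₁ hc₁, rho_cross_iff hr₂ hc₂]
  have hG : {γ | (α, γ) ∈ r₁ ∧ (γ, β) ∈ r₂} = ⋃ θ ∈ Θ, qset Y θ := by
    ext γ
    simp only [Set.mem_setOf_eq, Set.mem_iUnion]
    constructor
    · intro h
      exact ⟨qmap Y γ, (hiff (qmap Y γ) γ rfl).2 h, rfl⟩
    · rintro ⟨θ, hθ, hγ⟩
      exact (hiff θ γ hγ).1 hθ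
  have hcard : ∀ θ ∈ Θ, (qset Y θ).ncard = mval Y (dplus Y r₁) := by
    intro θ hθ
    obtain ⟨γ, hγ⟩ := qset_nonempty (Y := Y) θ
    have h1 : (α, γ) ∈ r₁ := ((hiff θ γ hγ).1 hθ).1
    have hγθ : qmap Y γ = θ := hγ
    rw [← hγθ, qset_card hhtf, ← dplus_eq hr₁ h1]
  show Θ.ncard * _ = interNum r₁ r₂ (α, β)
  rw [interNum]
  have hG2 : {γ | ((α, β).1, γ) ∈ r₁ ∧ (γ, (α, β).2) ∈ r₂} = ⋃ θ ∈ Θ, qset Y θ := hG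
  rw [hG2]
  rw [Set.ncard_eq_toFinset_card', Set.ncard_eq_toFinset_card']
  have hfin : (⋃ θ ∈ Θ, qset Y θ).toFinset = Θ.toFinset.biUnion (fun θ => (qset Y θ).toFinset) := by
    ext γ
    simp
  rw [hfin]
  rw [Finset.card_biUnion]
  · rw [Finset.sum_congr rfl (fun θ hθ => ?_)]
    · rw [Finset.sum_const, smul_eq_mul]
    · rw [← Set.ncard_eq_toFinset_card']
      exact hcard θ (by simpa using hθ)
  · intro θ₁ h₁ θ₂ h₂ hne
    simp only [Finset.disjoint_left, Set.mem_toFinset]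
    intro a ha₁ ha₂
    exact qset_disjoint hne ha₁ ha₂

end QuotCount

end CC15
namespace CC15

open Set

set_option linter.unusedSectionVars false
set_option linter.unusedVariables false

attribute [local instance] Classical.propDecidable

section Transport

variable {Ω : Type x} {Ω₂ : Type y} [Fintype Ω] [Fintype Ω₂]
variable {Y : CoherentConfiguration Ω} {Y₂ : CoherentConfiguration Ω₂}
variable (φ : AlgIso Y Y₂)
include φ

lemma ai_mem {s : Set (Ω × Ω)} (hs : s ∈ Y.S) : φ.toFun s ∈ Y₂.S := φ.bijOn.mapsTo hs

lemma ai_inj {s t : Set (Ω × Ω)} (hs : s ∈ Y.S) (ht : t ∈ Y.S)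
    (h : φ.toFun s = φ.toFun t) : s = t := φ.bijOn.injOn hs ht h

lemma ai_surj {t' : Set (Ω₂ × Ω₂)} (ht' : t' ∈ Y₂.S) : ∃ s ∈ Y.S, φ.toFun s = t' := by
  obtain ⟨s, hs, heq⟩ := φ.bijOn.surjOn ht'
  exact ⟨s, hs, heq⟩

lemma ai_card {r s t : Set (Ω × Ω)} (hr : r ∈ Y.S) (hs : s ∈ Y.S) (ht : t ∈ Y.S)
    {p : Ω × Ω} {p' : Ω₂ × Ω₂} (hp : p ∈ t) (hp' : p' ∈ φ.toFun t) :
    interNum r s p = interNum (φ.toFun r) (φ.toFun s) p' :=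
  φ.card_eq r hr s hs t ht p hp p' hp'

lemma ai_isDiag {s : Set (Ω × Ω)} (hs : s ∈ Y.S) : IsDiag (φ.toFun s) ↔ IsDiag s := by
  rw [isDiag_iff_char (ai_mem φ hs), isDiag_iff_char hs]
  constructor
  · intro H r hr t ht hrt p hp
    obtain ⟨p', hp'⟩ := rel_nonempty (ai_mem φ ht)
    rw [ai_card φ hs hr ht hp hp']
    exact H _ (ai_mem φ hr) _ (ai_mem φ ht)
      (fun hh => hrt (ai_inj φ hr ht hh)) _ hp'
  · intro H r' hr' t' ht' hrt' p' hp'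
    obtain ⟨r, hr, rfl⟩ := ai_surj φ hr'
    obtain ⟨t, ht, rfl⟩ := ai_surj φ ht'
    obtain ⟨p, hp⟩ := rel_nonempty ht
    rw [← ai_card φ hs hr ht hp hp']
    exact H r hr t ht (fun hh => hrt' (congrArg φ.toFun hh)) p hp

lemma ai_conv {s : Set (Ω × Ω)} (hs : s ∈ Y.S) :
    φ.toFun (conv s) = conv (φ.toFun s) := by
  obtain ⟨d, hd, hdd, p, hp, hpos⟩ := (conv_char hs (conv_mem hs)).1 rfl
  obtain ⟨p', hp'⟩ := rel_nonempty (ai_mem φ hd)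
  refine (conv_char (ai_mem φ hs) (ai_mem φ (conv_mem hs))).2
    ⟨φ.toFun d, ai_mem φ hd, (ai_isDiag φ hd).2 hdd, p', hp', ?_⟩
  rw [← ai_card φ hs (conv_mem hs) hd hp hp']
  exact hpos

lemma ai_dminus {s : Set (Ω × Ω)} (hs : s ∈ Y.S) :
    φ.toFun (dminus Y s) = dminus Y₂ (φ.toFun s) := by
  obtain ⟨⟨a, b⟩, hab⟩ := rel_nonempty hs
  obtain ⟨⟨a', b'⟩, hab'⟩ := rel_nonempty (ai_mem φ hs)
  have h1 : interNum (dminus Y s) s (a, b) = 1 := by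
    rw [interNum_diag_left (dminus_isDiag hs), if_pos ⟨mem_dminus hs hab, hab⟩]
  have h2 := ai_card φ (dminus_mem_S hs) hs hs hab hab'
  rw [h1] at h2
  have hdd' : IsDiag (φ.toFun (dminus Y s)) :=
    (ai_isDiag φ (dminus_mem_S hs)).2 (dminus_isDiag hs)
  rw [interNum_diag_left hdd'] at h2
  split_ifs at h2 with hc
  rw [dminus_eq (ai_mem φ hs) hab']
  exact (relOf_eq (ai_mem φ (dminus_mem_S hs)) hc.1).symm

lemma ai_dplus {s : Set (Ω × Ω)} (hs : s ∈ Y.S) :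
    φ.toFun (dplus Y s) = dplus Y₂ (φ.toFun s) := by
  obtain ⟨⟨a, b⟩, hab⟩ := rel_nonempty hs
  obtain ⟨⟨a', b'⟩, hab'⟩ := rel_nonempty (ai_mem φ hs)
  have h1 : interNum s (dplus Y s) (a, b) = 1 := by
    rw [interNum_diag_right (dplus_isDiag hs), if_pos ⟨mem_dplus hs hab, hab⟩]
  have h2 := ai_card φ hs (dplus_mem_S hs) hs hab hab'
  rw [h1] at h2
  have hdd' : IsDiag (φ.toFun (dplus Y s)) :=
    (ai_isDiag φ (dplus_mem_S hs)).2 (dplus_isDiag hs)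
  rw [interNum_diag_right hdd'] at h2
  split_ifs at h2 with hc
  rw [dplus_eq (ai_mem φ hs) hab']
  exact (relOf_eq (ai_mem φ (dplus_mem_S hs)) hc.1).symm

lemma ai_nval {s : Set (Ω × Ω)} (hs : s ∈ Y.S) : nval (φ.toFun s) = nval s := by
  obtain ⟨⟨a, b⟩, hab⟩ := rel_nonempty hs
  have hd' : dminus Y₂ (φ.toFun s) ∈ Y₂.S := dminus_mem_S (ai_mem φ hs)
  obtain ⟨⟨a', c'⟩, ha'⟩ := rel_nonempty hd'
  have ha'' : a' = c' := dminus_isDiag (ai_mem φ hs) _ ha'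
  subst ha''
  have hp' : (a', a') ∈ φ.toFun (dminus Y s) := by rw [ai_dminus φ hs]; exact ha'
  have key := ai_card φ hs (conv_mem hs) (dminus_mem_S hs) (mem_dminus hs hab) hp'
  rw [ai_conv φ hs] at key
  rw [outdeg_eq_interNum, outdeg_eq_interNum] at key
  rw [outdeg_const hs (mem_dminus hs hab), outdeg_const (ai_mem φ hs) ha'] at key
  exact key.symm

lemma ai_twinChar {s : Set (Ω × Ω)} (hs : s ∈ Y.S) :
    twinChar Y₂ (φ.toFun s) ↔ twinChar Y s := by
  obtain ⟨p, hp⟩ := rel_nonempty hs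
  obtain ⟨p', hp'⟩ := rel_nonempty (ai_mem φ hs)
  constructor
  · intro H u hu r hr hcond q hq
    rw [interNum_const hu hr hs hq hp]
    have econd : conv (φ.toFun u) ≠ φ.toFun r := by
      rw [← ai_conv φ hu]
      intro hh
      exact hcond (ai_inj φ (conv_mem hu) hr hh)
    have key := H (φ.toFun u) (ai_mem φ hu) (φ.toFun r) (ai_mem φ hr) econd p' hp'
    rw [← ai_card φ hu hr hs hp hp'] at key
    rw [key]
    have e1 : (φ.toFun u = dminus Y₂ (φ.toFun s) ∧ φ.toFun r = φ.toFun s) ↔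
        (u = dminus Y s ∧ r = s) := by
      rw [← ai_dminus φ hs]
      constructor
      · rintro ⟨h1, h2⟩
        exact ⟨ai_inj φ hu (dminus_mem_S hs) h1, ai_inj φ hr hs h2⟩
      · rintro ⟨rfl, rfl⟩; exact ⟨rfl, rfl⟩
    have e2 : (φ.toFun u = φ.toFun s ∧ φ.toFun r = dplus Y₂ (φ.toFun s)) ↔
        (u = s ∧ r = dplus Y s) := by
      rw [← ai_dplus φ hs]
      constructor
      · rintro ⟨h1, h2⟩
        exact ⟨ai_inj φ hu hs h1, ai_inj φ hr (dplus_mem_S hs) h2⟩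
      · rintro ⟨rfl, rfl⟩; exact ⟨rfl, rfl⟩
    rw [if_congr e1 rfl rfl, if_congr e2 rfl rfl]
  · intro H u' hu' r' hr' hcond' q' hq'
    obtain ⟨u, hu, rfl⟩ := ai_surj φ hu'
    obtain ⟨r, hr, rfl⟩ := ai_surj φ hr'
    rw [interNum_const (ai_mem φ hu) (ai_mem φ hr) (ai_mem φ hs) hq' hp']
    have econd : conv u ≠ r := by
      rintro rfl
      exact hcond' (by rw [← ai_conv φ hu])
    have key := H u hu r hr econd p hp
    rw [ai_card φ hu hr hs hp hp'] at key
    rw [key]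
    have e1 : (u = dminus Y s ∧ r = s) ↔
        (φ.toFun u = dminus Y₂ (φ.toFun s) ∧ φ.toFun r = φ.toFun s) := by
      rw [← ai_dminus φ hs]
      constructor
      · rintro ⟨rfl, rfl⟩; exact ⟨rfl, rfl⟩
      · rintro ⟨h1, h2⟩
        exact ⟨ai_inj φ hu (dminus_mem_S hs) h1, ai_inj φ hr hs h2⟩
    have e2 : (u = s ∧ r = dplus Y s) ↔
        (φ.toFun u = φ.toFun s ∧ φ.toFun r = dplus Y₂ (φ.toFun s)) := by
      rw [← ai_dplus φ hs]
      constructor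
      · rintro ⟨rfl, rfl⟩; exact ⟨rfl, rfl⟩
      · rintro ⟨h1, h2⟩
        exact ⟨ai_inj φ hu hs h1, ai_inj φ hr (dplus_mem_S hs) h2⟩
    rw [if_congr e1 rfl rfl, if_congr e2 rfl rfl]

lemma ai_etype {s : Set (Ω × Ω)} (hs : s ∈ Y.S) : EType Y₂ (φ.toFun s) ↔ EType Y s :=
  or_congr (ai_isDiag φ hs) (ai_twinChar φ hs)

lemma ai_cross {s : Set (Ω × Ω)} (hs : s ∈ Y.S) : Cross Y₂ (φ.toFun s) ↔ Cross Y s :=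
  and_congr (not_congr (ai_isDiag φ hs)) (not_congr (ai_twinChar φ hs))

lemma ai_dhat {s : Set (Ω × Ω)} (hs : s ∈ Y.S) :
    φ.toFun (dhat Y s) = dhat Y₂ (φ.toFun s) := by
  by_cases hd : IsDiag s
  · rw [dhat, if_pos hd, dhat, if_pos ((ai_isDiag φ hs).2 hd)]
  · rw [dhat, if_neg hd, dhat, if_neg (fun hh => hd ((ai_isDiag φ hs).1 hh)), ai_dminus φ hs]

lemma ai_bad : BadCC Y₂ ↔ BadCC Y := by
  constructor
  · rintro ⟨s', hs', hnd', hch', hne'⟩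
    obtain ⟨s, hs, rfl⟩ := ai_surj φ hs'
    refine ⟨s, hs, fun hh => hnd' ((ai_isDiag φ hs).2 hh), (ai_twinChar φ hs).1 hch', ?_⟩
    intro hh
    exact hne' (by rw [← ai_dminus φ hs, ← ai_dplus φ hs, hh])
  · rintro ⟨s, hs, hnd, hch, hne⟩
    refine ⟨φ.toFun s, ai_mem φ hs, fun hh => hnd ((ai_isDiag φ hs).1 hh),
      (ai_twinChar φ hs).2 hch, ?_⟩
    intro hh
    rw [← ai_dminus φ hs, ← ai_dplus φ hs] at hh
    exact hne (ai_inj φ (dminus_mem_S hs) (dplus_mem_S hs) hh)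

lemma ai_htf (h : HTF Y) : HTF Y₂ :=
  htf_of_not_bad (fun hb => bad_elim h ((ai_bad φ).1 hb))

lemma ai_mval (hhtf₂ : HTF Y₂) {d : Set (Ω × Ω)} (hd : d ∈ Y.S) :
    mval Y₂ (φ.toFun d) = mval Y d := by
  rw [mval, mval]
  by_cases h : ∃ s ∈ Y.S, ¬ IsDiag s ∧ twinChar Y s ∧ dminus Y s = d
  · rw [dif_pos h]
    have h' : ∃ s' ∈ Y₂.S, ¬ IsDiag s' ∧ twinChar Y₂ s' ∧ dminus Y₂ s' = φ.toFun d := by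
      obtain ⟨hs, hnd, hch, hdm⟩ := h.choose_spec
      exact ⟨φ.toFun h.choose, ai_mem φ hs, fun hh => hnd ((ai_isDiag φ hs).1 hh),
        (ai_twinChar φ hs).2 hch, by rw [← ai_dminus φ hs, hdm]⟩
    rw [dif_pos h']
    obtain ⟨hs, hnd, hch, hdm⟩ := h.choose_spec
    obtain ⟨hs', hnd', hch', hdm'⟩ := h'.choose_spec
    have : h'.choose = φ.toFun h.choose :=
      etype_offdiag_unique hhtf₂ hs' (ai_mem φ hs) hnd'
        (fun hh => hnd ((ai_isDiag φ hs).1 hh)) hch' ((ai_twinChar φ hs).2 hch)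
        (by rw [hdm', ← ai_dminus φ hs, hdm])
    rw [this, ai_nval φ hs]
  · rw [dif_neg h]
    have h' : ¬ ∃ s' ∈ Y₂.S, ¬ IsDiag s' ∧ twinChar Y₂ s' ∧ dminus Y₂ s' = φ.toFun d := by
      rintro ⟨s', hs', hnd', hch', hdm'⟩
      obtain ⟨s, hs, rfl⟩ := ai_surj φ hs'
      refine h ⟨s, hs, fun hh => hnd' ((ai_isDiag φ hs).2 hh), (ai_twinChar φ hs).1 hch', ?_⟩
      rw [← ai_dminus φ hs] at hdm'
      exact ai_inj φ (dminus_mem_S hs) hd hdm'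
    rw [dif_neg h']

end Transport

end CC15
namespace CC15

open Set

set_option linter.unusedSectionVars false
set_option linter.unusedVariables false

attribute [local instance] Classical.propDecidable

section Transversal

variable {Ω : Type x} [Fintype Ω] {Y : CoherentConfiguration Ω}

lemma mem_diag_iff {d : Set (Ω × Ω)} (hd : d ∈ Y.S) {α : Ω} :
    (α, α) ∈ d ↔ d = relOf Y (α, α) := by
  constructor
  · intro h
    exact (relOf_eq hd h).symm
  · rintro rfl
    exact mem_relOf Y _

lemma etype_iff_twin_pair {t : Set (Ω × Ω)} (ht : t ∈ Y.S) {α β : Ω} (hp : (α, β) ∈ t) :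
    XTwin Y α β ↔ EType Y t := by
  constructor
  · intro htw
    by_cases hαβ : α = β
    · subst hαβ
      exact Or.inl (isDiag_of_diag_mem ht hp)
    · exact Or.inr (twinChar_of_pair ht (fun hd => hαβ (hd _ hp)) hp htw)
  · rintro (hd | hch)
    · have : α = β := hd _ hp
      subst this
      exact xtwin_refl α
    · exact pair_of_twinChar ht hch hp

lemma etype_or_cross {s : Set (Ω × Ω)} (hs : s ∈ Y.S) : EType Y s ∨ Cross Y s := by
  by_cases h1 : IsDiag s
  · exact Or.inl (Or.inl h1)
  by_cases h2 : twinChar Y s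
  · exact Or.inl (Or.inr h2)
  · exact Or.inr ⟨h1, h2⟩

lemma dhat_diag {s : Set (Ω × Ω)} (h : IsDiag s) : dhat Y s = s := if_pos h

lemma dhat_dhat {s : Set (Ω × Ω)} (hs : s ∈ Y.S) : dhat Y (dhat Y s) = dhat Y s :=
  dhat_diag (dhat_isDiag hs)

lemma rho_dhat (hhtf : HTF Y) {s : Set (Ω × Ω)} (hs : s ∈ Y.S) (he : EType Y s) :
    rho Y (dhat Y s) = rho Y s := by
  rw [rho_etype_eq hhtf (dhat_mem_S hs) (Or.inl (dhat_isDiag hs)),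
    rho_etype_eq hhtf hs he, dhat_dhat hs]

lemma same_fiber_of_third {a b γ : Ω} (htw : XTwin Y a b) (hγa : γ ≠ a) (hγb : γ ≠ b) :
    relOf Y (a, a) = relOf Y (b, b) := by
  set r := relOf Y (γ, a) with hrd
  have hr : r ∈ Y.S := relOf_mem Y _
  have hγa' : (γ, a) ∈ r := mem_relOf Y _
  have hγb' : (γ, b) ∈ r := (htw γ hγa hγb r hr).1 hγa'
  set d := relOf Y (a, a) with hdd
  have hd : d ∈ Y.S := relOf_mem Y _
  have hdiag : IsDiag d := relOf_diag_isDiag a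
  have key := interNum_const hr hd hr hγa' hγb'
  rw [interNum_diag_right hdiag, interNum_diag_right hdiag,
    if_pos ⟨mem_relOf Y _, hγa'⟩] at key
  split_ifs at key with hc
  · exact (relOf_eq hd hc.1).symm

/-- the quotient intersection numbers only depend on the basis relation of the base pair -/
lemma quotNum_const (hhtf : HTF Y) {r₁ r₂ t : Set (Ω × Ω)} (hr₁ : r₁ ∈ Y.S)
    (hr₂ : r₂ ∈ Y.S) (ht : t ∈ Y.S) {α β α₂ β₂ : Ω} (hp : (α, β) ∈ t) (hq : (α₂, β₂) ∈ t) :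
    interNum (rho Y r₁) (rho Y r₂) (qmap Y α, qmap Y β) =
      interNum (rho Y r₁) (rho Y r₂) (qmap Y α₂, qmap Y β₂) := by
  have hda : relOf Y (α, α) = relOf Y (α₂, α₂) := by
    rw [← dminus_eq ht hp, dminus_eq ht hq]
  have hdb : relOf Y (β, β) = relOf Y (β₂, β₂) := by
    rw [← dplus_eq ht hp, dplus_eq ht hq]
  rcases etype_or_cross hr₁ with he₁ | hc₁ <;> rcases etype_or_cross hr₂ with he₂ | hc₂
  · rw [quotNum_ee hhtf hr₁ he₁ hr₂ he₂, quotNum_ee hhtf hr₁ he₁ hr₂ he₂]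
    refine if_congr (and_congr ?_ (and_congr ?_ ?_)) rfl rfl
    · rw [qmap_eq_iff, qmap_eq_iff, etype_iff_twin_pair ht hp, etype_iff_twin_pair ht hq]
    · rw [mem_diag_iff (dhat_mem_S hr₁), mem_diag_iff (dhat_mem_S hr₁), ← hda]
    · rw [mem_diag_iff (dhat_mem_S hr₂), mem_diag_iff (dhat_mem_S hr₂), ← hda]
  · rw [quotNum_ec hhtf hr₁ he₁ hr₂ hc₂, quotNum_ec hhtf hr₁ he₁ hr₂ hc₂]
    refine if_congr (and_congr ?_ ?_) rfl rfl
    · rw [mem_diag_iff (dhat_mem_S hr₁), mem_diag_iff (dhat_mem_S hr₁), ← hda]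
    · constructor
      · intro hm
        rw [rel_eq_of_mem ht hr₂ hp hm] at hq
        exact hq
      · intro hm
        rw [rel_eq_of_mem ht hr₂ hq hm] at hp
        exact hp
  · rw [quotNum_ce hhtf hr₁ hc₁ hr₂ he₂, quotNum_ce hhtf hr₁ hc₁ hr₂ he₂]
    refine if_congr (and_congr ?_ ?_) rfl rfl
    · constructor
      · intro hm
        rw [rel_eq_of_mem ht hr₁ hp hm] at hq
        exact hq
      · intro hm
        rw [rel_eq_of_mem ht hr₁ hq hm] at hp
        exact hp
    · rw [mem_diag_iff (dhat_mem_S hr₂), mem_diag_iff (dhat_mem_S hr₂), ← hdb]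
  · have h1 := quotNum_cc hhtf hr₁ hc₁ hr₂ hc₂ α β
    have h2 := quotNum_cc hhtf hr₁ hc₁ hr₂ hc₂ α₂ β₂
    have h3 : interNum r₁ r₂ (α, β) = interNum r₁ r₂ (α₂, β₂) :=
      interNum_const hr₁ hr₂ ht hp hq
    have hm : 1 ≤ mval Y (dplus Y r₁) := mval_pos _
    rw [h3, ← h2] at h1
    exact Nat.eq_of_mul_eq_mul_right (by omega) h1

variable (Y) in
def reps : Set Ω := Set.range (fun θ : Quot (XTwin Y) => Quot.out θ)

lemma qmap_out (θ : Quot (XTwin Y)) : qmap Y (Quot.out θ) = θ := Quot.out_eq θ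

lemma out_mem_reps (θ : Quot (XTwin Y)) : Quot.out θ ∈ reps Y := ⟨θ, rfl⟩

lemma reps_inj {a b : Ω} (ha : a ∈ reps Y) (hb : b ∈ reps Y) (h : qmap Y a = qmap Y b) :
    a = b := by
  obtain ⟨θ, rfl⟩ := ha
  obtain ⟨θ', rfl⟩ := hb
  rw [qmap_out, qmap_out] at h
  rw [h]

variable (Y) in
def res (s : Set (Ω × Ω)) : Set (↥(reps Y) × ↥(reps Y)) :=
  {p | ((p.1 : Ω), (p.2 : Ω)) ∈ s}

variable (Y) in
def NotEOff (s : Set (Ω × Ω)) : Prop := IsDiag s ∨ Cross Y s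

lemma noteoff_of_rel {x y : ↥(reps Y)} : NotEOff Y (relOf Y ((x : Ω), (y : Ω))) := by
  by_cases hxy : (x : Ω) = (y : Ω)
  · exact Or.inl (isDiag_of_diag_mem (relOf_mem Y _) (by rw [← hxy] at *; exact mem_relOf Y _))
  · right
    constructor
    · intro hd
      exact hxy (hd _ (mem_relOf Y _))
    · intro hch
      have htw : XTwin Y (x : Ω) (y : Ω) := pair_of_twinChar (relOf_mem Y _) hch (mem_relOf Y _)
      exact hxy (reps_inj x.2 y.2 (qmap_eq_iff.2 htw))

lemma res_nonempty (hhtf : HTF Y) {s : Set (Ω × Ω)} (hs : s ∈ Y.S) (hno : NotEOff Y s) :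
    (res Y s).Nonempty := by
  obtain ⟨⟨a, b⟩, hab⟩ := rel_nonempty hs
  rcases hno with hd | hc
  · have hab' : a = b := hd _ hab
    subst hab'
    set xq : ↥(reps Y) := ⟨Quot.out (qmap Y a), out_mem_reps _⟩ with hxq
    refine ⟨(xq, xq), ?_⟩
    show ((xq : Ω), (xq : Ω)) ∈ s
    have htw : XTwin Y (Quot.out (qmap Y a)) a := qmap_eq_iff.1 (qmap_out _)
    have h1 : relOf Y ((xq : Ω), (xq : Ω)) = relOf Y (a, a) := hhtf _ _ htw
    rw [mem_diag_iff hs, h1, ← mem_diag_iff hs]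
    exact hab
  · set xq : ↥(reps Y) := ⟨Quot.out (qmap Y a), out_mem_reps _⟩ with hxq
    set yq : ↥(reps Y) := ⟨Quot.out (qmap Y b), out_mem_reps _⟩ with hyq
    refine ⟨(xq, yq), ?_⟩
    show ((xq : Ω), (yq : Ω)) ∈ s
    exact cross_block hs hc hab (xtwin_symm (qmap_eq_iff.1 (qmap_out _)))
      (xtwin_symm (qmap_eq_iff.1 (qmap_out _)))

lemma res_mem_iff (hhtf : HTF Y) {r : Set (Ω × Ω)} (hr : r ∈ Y.S) (hno : NotEOff Y r)
    {a γ : Ω} (ha : a ∈ reps Y) (hγ : γ ∈ reps Y) :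
    (a, γ) ∈ r ↔ (qmap Y a, qmap Y γ) ∈ rho Y r := by
  rcases hno with hd | hc
  · constructor
    · exact mem_rho_of_mem
    · intro h
      obtain ⟨h1, h2⟩ := (rho_etype_mem_iff' hhtf hr (Or.inl hd) (θ := qmap Y a)).1 h
      have : a = γ := reps_inj ha hγ h1
      subst this
      rw [dhat_diag hd] at h2
      exact h2
  · exact (rho_cross_iff hr hc).symm

lemma res_interNum (hhtf : HTF Y) {r s : Set (Ω × Ω)} (hr : r ∈ Y.S) (hs : s ∈ Y.S)
    (hnr : NotEOff Y r) (hns : NotEOff Y s) (x y : ↥(reps Y)) :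
    interNum (res Y r) (res Y s) (x, y) =
      interNum (rho Y r) (rho Y s) (qmap Y (x : Ω), qmap Y (y : Ω)) := by
  have hinj : Function.Injective (fun γ : ↥(reps Y) => qmap Y (γ : Ω)) := by
    intro γ₁ γ₂ h
    exact Subtype.ext (reps_inj γ₁.2 γ₂.2 h)
  have himg : {θ | (qmap Y (x : Ω), θ) ∈ rho Y r ∧ (θ, qmap Y (y : Ω)) ∈ rho Y s} =
      (fun γ : ↥(reps Y) => qmap Y (γ : Ω)) ''
        {γ : ↥(reps Y) | ((x : Ω), (γ : Ω)) ∈ r ∧ ((γ : Ω), (y : Ω)) ∈ s} := by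
    ext θ
    simp only [Set.mem_setOf_eq, Set.mem_image]
    constructor
    · rintro ⟨h1, h2⟩
      refine ⟨⟨Quot.out θ, out_mem_reps θ⟩, ⟨?_, ?_⟩, qmap_out θ⟩
      · rw [res_mem_iff hhtf hr hnr x.2 (out_mem_reps θ), qmap_out]
        exact h1
      · rw [res_mem_iff hhtf hs hns (out_mem_reps θ) y.2, qmap_out]
        exact h2
    · rintro ⟨γ, ⟨h1, h2⟩, rfl⟩
      exact ⟨(res_mem_iff hhtf hr hnr x.2 γ.2).1 h1, (res_mem_iff hhtf hs hns γ.2 y.2).1 h2⟩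
  show {γ : ↥(reps Y) | ((x : Ω), (γ : Ω)) ∈ r ∧ ((γ : Ω), (y : Ω)) ∈ s}.ncard = _
  rw [interNum, himg, Set.ncard_image_of_injective _ hinj]

end Transversal

end CC15
namespace CC15

open Set

set_option linter.unusedSectionVars false
set_option linter.unusedVariables false

attribute [local instance] Classical.propDecidable

section TransCC

variable {Ω : Type x} [Fintype Ω] {Y : CoherentConfiguration Ω}

lemma isDiag_conv {s : Set (Ω × Ω)} (h : IsDiag (conv s)) : IsDiag s := by
  intro p hp
  exact (h (p.2, p.1) (by simpa using hp)).symm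

lemma cross_conv {s : Set (Ω × Ω)} (hs : s ∈ Y.S) (hc : Cross Y s) : Cross Y (conv s) := by
  constructor
  · intro hd
    exact hc.1 (isDiag_conv hd)
  · intro hch
    obtain ⟨⟨a, b⟩, hab⟩ := rel_nonempty hs
    have hba : (b, a) ∈ conv s := hab
    have htw : XTwin Y b a := pair_of_twinChar (conv_mem hs) hch hba
    exact not_twin_of_cross hs hc hab (xtwin_symm htw)

lemma noteoff_conv {s : Set (Ω × Ω)} (hs : s ∈ Y.S) (hno : NotEOff Y s) :
    NotEOff Y (conv s) := by
  rcases hno with hd | hc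
  · rw [conv_diag hd]
    exact Or.inl hd
  · exact Or.inr (cross_conv hs hc)

lemma res_mem_pair {s : Set (Ω × Ω)} {x y : ↥(reps Y)} :
    (x, y) ∈ res Y s ↔ ((x : Ω), (y : Ω)) ∈ s := Iff.rfl

lemma res_inj_on {s t : Set (Ω × Ω)} (hs : s ∈ Y.S) (ht : t ∈ Y.S) {p : ↥(reps Y) × ↥(reps Y)}
    (hps : p ∈ res Y s) (hpt : p ∈ res Y t) : s = t :=
  rel_eq_of_mem hs ht hps hpt

variable (Y) in
noncomputable def transCC (hhtf : HTF Y) : CoherentConfiguration ↥(reps Y) where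
  S := {t | ∃ s ∈ Y.S, NotEOff Y s ∧ t = res Y s}
  isPartition := by
    constructor
    · rintro ⟨s, hs, hno, heq⟩
      obtain ⟨p, hp⟩ := res_nonempty hhtf hs hno
      rw [← heq] at hp
      exact hp
    · rintro ⟨x, y⟩
      refine ⟨res Y (relOf Y ((x : Ω), (y : Ω))),
        ⟨⟨relOf Y _, relOf_mem Y _, noteoff_of_rel, rfl⟩, mem_relOf Y _⟩, ?_⟩
      rintro t ⟨⟨s, hs, hno, rfl⟩, hmem⟩
      have : s = relOf Y ((x : Ω), (y : Ω)) := (relOf_eq hs hmem).symm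
      rw [this]
  diag_isRelation := by
    refine ⟨{t | ∃ d ∈ Y.S, IsDiag d ∧ t = res Y d}, ?_, ?_⟩
    · rintro t ⟨d, hd, hdd, rfl⟩
      exact ⟨d, hd, Or.inl hdd, rfl⟩
    · ext ⟨x, y⟩
      constructor
      · rintro ⟨t, ⟨d, hd, hdd, rfl⟩, hmem⟩
        have : (x : Ω) = (y : Ω) := hdd _ hmem
        exact ⟨Subtype.ext this, trivial⟩
      · rintro ⟨heq, -⟩
        have hxy : x = y := heq
        subst hxy
        exact ⟨res Y (relOf Y ((x : Ω), (x : Ω))),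
          ⟨relOf Y _, relOf_mem Y _, relOf_diag_isDiag _, rfl⟩, mem_relOf Y _⟩
  swap_mem := by
    rintro t ⟨s, hs, hno, rfl⟩
    refine ⟨conv s, conv_mem hs, noteoff_conv hs hno, ?_⟩
    rfl
  coherent := by
    rintro r'' ⟨r, hr, hnr, rfl⟩ s'' ⟨s, hs, hns, rfl⟩ t'' ⟨t, ht, hnt, rfl⟩
      ⟨x, y⟩ hp ⟨x₂, y₂⟩ hq
    rw [res_interNum hhtf hr hs hnr hns, res_interNum hhtf hr hs hnr hns]
    exact quotNum_const hhtf hr hs ht hp hq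

lemma transCC_S (hhtf : HTF Y) {t : Set (↥(reps Y) × ↥(reps Y))} :
    t ∈ (transCC Y hhtf).S ↔ ∃ s ∈ Y.S, NotEOff Y s ∧ t = res Y s := Iff.rfl

end TransCC

end CC15
namespace CC15

open Set

set_option linter.unusedSectionVars false
set_option linter.unusedVariables false

attribute [local instance] Classical.propDecidable

section Main

variable {Ω : Type x} {Ω₂ : Type y} [Fintype Ω] [Fintype Ω₂]
variable {X : CoherentConfiguration Ω} {X' : CoherentConfiguration Ω₂}

lemma diag_of_etype_noteoff {s : Set (Ω × Ω)} (he : EType X s) (hno : NotEOff X s) :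
    IsDiag s := by
  rcases hno with hd | hc
  · exact hd
  · rcases he with hd | hch
    · exact hd
    · exact absurd hch hc.2

variable (X) in
noncomputable def pick (R : Set (Quot (XTwin X) × Quot (XTwin X))) : Set (Ω × Ω) :=
  if h : ∃ r ∈ X.S, rho X r = R then
    (if EType X h.choose then dhat X h.choose else h.choose) else ∅

lemma pick_spec (hhtf : HTF X) {R : Set (Quot (XTwin X) × Quot (XTwin X))}
    (hR : ∃ r ∈ X.S, rho X r = R) :
    pick X R ∈ X.S ∧ NotEOff X (pick X R) ∧ rho X (pick X R) = R := by
  rw [pick, dif_pos hR]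
  obtain ⟨hc, hrho⟩ := hR.choose_spec
  split_ifs with he
  · exact ⟨dhat_mem_S hc, Or.inl (dhat_isDiag hc), by rw [rho_dhat hhtf hc he, hrho]⟩
  · refine ⟨hc, ?_, hrho⟩
    rcases etype_or_cross hc with h1 | h2
    · exact absurd h1 he
    · exact Or.inr h2

lemma pick_eq (hhtf : HTF X) {R : Set (Quot (XTwin X) × Quot (XTwin X))}
    {r : Set (Ω × Ω)} (hr : r ∈ X.S) (hno : NotEOff X r) (heq : rho X r = R) :
    pick X R = r := by
  have hR : ∃ r ∈ X.S, rho X r = R := ⟨r, hr, heq⟩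
  rw [pick, dif_pos hR]
  obtain ⟨hc, hrho⟩ := hR.choose_spec
  have h2 : rho X hR.choose = rho X r := by rw [hrho, heq]
  rcases (rho_eq_iff hhtf hc hr).1 h2 with h3 | ⟨he1, he2, hd⟩
  · rw [h3]
    split_ifs with he
    · exact dhat_diag (diag_of_etype_noteoff he hno)
    · rfl
  · rw [if_pos he1, hd]
    exact dhat_diag (diag_of_etype_noteoff he2 hno)

lemma noteoff_transport (φ : AlgIso X X') {s : Set (Ω × Ω)} (hs : s ∈ X.S)
    (h : NotEOff X s) : NotEOff X' (φ.toFun s) := by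
  rcases h with hd | hc
  · exact Or.inl ((ai_isDiag φ hs).2 hd)
  · exact Or.inr ((ai_cross φ hs).2 hc)

lemma noteoff_transport' (φ : AlgIso X X') {s : Set (Ω × Ω)} (hs : s ∈ X.S)
    (h : NotEOff X' (φ.toFun s)) : NotEOff X s := by
  rcases h with hd | hc
  · exact Or.inl ((ai_isDiag φ hs).1 hd)
  · exact Or.inr ((ai_cross φ hs).1 hc)

/-- transport of quotient intersection numbers along an algebraic isomorphism -/
lemma quotNum_transport (hhtf : HTF X) (hhtf' : HTF X') (φ : AlgIso X X')
    {r₁ r₂ t₃ : Set (Ω × Ω)} (hr₁ : r₁ ∈ X.S) (hr₂ : r₂ ∈ X.S) (ht₃ : t₃ ∈ X.S)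
    {α β : Ω} {x y : Ω₂} (hp : (α, β) ∈ t₃) (hp' : (x, y) ∈ φ.toFun t₃) :
    interNum (rho X r₁) (rho X r₂) (qmap X α, qmap X β) =
      interNum (rho X' (φ.toFun r₁)) (rho X' (φ.toFun r₂)) (qmap X' x, qmap X' y) := by
  have hdm : ∀ {u : Set (Ω × Ω)}, u ∈ X.S →
      ((α, α) ∈ dhat X u ↔ (x, x) ∈ dhat X' (φ.toFun u)) := by
    intro u hu
    rw [mem_diag_iff (dhat_mem_S hu), mem_diag_iff (dhat_mem_S (ai_mem φ hu)),
      ← dminus_eq ht₃ hp, ← dminus_eq (ai_mem φ ht₃) hp', ← ai_dhat φ hu, ← ai_dminus φ ht₃]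
    constructor
    · intro h; rw [h]
    · intro h; exact ai_inj φ (dhat_mem_S hu) (dminus_mem_S ht₃) h
  have hdp : ∀ {u : Set (Ω × Ω)}, u ∈ X.S →
      ((β, β) ∈ dhat X u ↔ (y, y) ∈ dhat X' (φ.toFun u)) := by
    intro u hu
    rw [mem_diag_iff (dhat_mem_S hu), mem_diag_iff (dhat_mem_S (ai_mem φ hu)),
      ← dplus_eq ht₃ hp, ← dplus_eq (ai_mem φ ht₃) hp', ← ai_dhat φ hu, ← ai_dplus φ ht₃]
    constructor
    · intro h; rw [h]
    · intro h; exact ai_inj φ (dhat_mem_S hu) (dplus_mem_S ht₃) h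
  have hmemiff : ∀ {u : Set (Ω × Ω)}, u ∈ X.S → ((α, β) ∈ u ↔ (x, y) ∈ φ.toFun u) := by
    intro u hu
    constructor
    · intro h
      have : u = t₃ := rel_eq_of_mem hu ht₃ h hp
      subst this
      exact hp'
    · intro h
      have : φ.toFun u = φ.toFun t₃ := rel_eq_of_mem (ai_mem φ hu) (ai_mem φ ht₃) h hp'
      have := ai_inj φ hu ht₃ this
      subst this
      exact hp
  rcases etype_or_cross hr₁ with he₁ | hc₁ <;> rcases etype_or_cross hr₂ with he₂ | hc₂
  · rw [quotNum_ee hhtf hr₁ he₁ hr₂ he₂,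
      quotNum_ee hhtf' (ai_mem φ hr₁) ((ai_etype φ hr₁).2 he₁)
        (ai_mem φ hr₂) ((ai_etype φ hr₂).2 he₂)]
    refine if_congr (and_congr ?_ (and_congr (hdm hr₁) (hdm hr₂))) rfl rfl
    rw [qmap_eq_iff, qmap_eq_iff, etype_iff_twin_pair ht₃ hp,
      etype_iff_twin_pair (ai_mem φ ht₃) hp', ai_etype φ ht₃]
  · rw [quotNum_ec hhtf hr₁ he₁ hr₂ hc₂,
      quotNum_ec hhtf' (ai_mem φ hr₁) ((ai_etype φ hr₁).2 he₁)
        (ai_mem φ hr₂) ((ai_cross φ hr₂).2 hc₂)]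
    exact if_congr (and_congr (hdm hr₁) (hmemiff hr₂)) rfl rfl
  · rw [quotNum_ce hhtf hr₁ hc₁ hr₂ he₂,
      quotNum_ce hhtf' (ai_mem φ hr₁) ((ai_cross φ hr₁).2 hc₁)
        (ai_mem φ hr₂) ((ai_etype φ hr₂).2 he₂)]
    exact if_congr (and_congr (hmemiff hr₁) (hdp hr₂)) rfl rfl
  · have h1 := quotNum_cc hhtf hr₁ hc₁ hr₂ hc₂ α β
    have h2 := quotNum_cc hhtf' (ai_mem φ hr₁) ((ai_cross φ hr₁).2 hc₁)
      (ai_mem φ hr₂) ((ai_cross φ hr₂).2 hc₂) x y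
    have h3 : interNum r₁ r₂ (α, β) = interNum (φ.toFun r₁) (φ.toFun r₂) (x, y) :=
      ai_card φ hr₁ hr₂ ht₃ hp hp'
    have h4 : mval X' (dplus X' (φ.toFun r₁)) = mval X (dplus X r₁) := by
      rw [← ai_dplus φ hr₁, ai_mval φ hhtf' (dplus_mem_S hr₁)]
    rw [h3, ← h2, h4] at h1
    have hm : 1 ≤ mval X (dplus X r₁) := mval_pos _
    exact Nat.eq_of_mul_eq_mul_right (by omega) h1

variable (X) in
lemma hQmem {Q : CoherentConfiguration (Quot (XTwin X))}
    (hQ : Q.S = (fun s => Prod.map (Quot.mk (XTwin X)) (Quot.mk (XTwin X)) '' s) '' X.S)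
    {R : Set (Quot (XTwin X) × Quot (XTwin X))} :
    R ∈ Q.S ↔ ∃ r ∈ X.S, rho X r = R := by
  rw [hQ]
  constructor
  · rintro ⟨s, hs, rfl⟩
    exact ⟨s, hs, rfl⟩
  · rintro ⟨s, hs, rfl⟩
    exact ⟨s, hs, rfl⟩

/-- the induced algebraic isomorphism between the quotient and the transversal
configuration -/
noncomputable def tPhi (hhtf : HTF X) (hhtf' : HTF X') (φ : AlgIso X X')
    (Q : CoherentConfiguration (Quot (XTwin X)))
    (hQ : Q.S = (fun s => Prod.map (Quot.mk (XTwin X)) (Quot.mk (XTwin X)) '' s) '' X.S) :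
    AlgIso Q (transCC X' hhtf') where
  toFun := fun R => res X' (φ.toFun (pick X R))
  bijOn := by
    refine ⟨?_, ?_, ?_⟩
    · intro R hR
      obtain ⟨hm, hno, hrho⟩ := pick_spec hhtf ((hQmem X hQ).1 hR)
      exact ⟨φ.toFun (pick X R), ai_mem φ hm, noteoff_transport φ hm hno, rfl⟩
    · intro R₁ h₁ R₂ h₂ heq
      obtain ⟨hm₁, hno₁, hrho₁⟩ := pick_spec hhtf ((hQmem X hQ).1 h₁)
      obtain ⟨hm₂, hno₂, hrho₂⟩ := pick_spec hhtf ((hQmem X hQ).1 h₂)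
      obtain ⟨p, hp⟩ := res_nonempty hhtf' (ai_mem φ hm₁) (noteoff_transport φ hm₁ hno₁)
      have heq' : res X' (φ.toFun (pick X R₁)) = res X' (φ.toFun (pick X R₂)) := heq
      have hp₂ : p ∈ res X' (φ.toFun (pick X R₂)) := by rw [← heq']; exact hp
      have : φ.toFun (pick X R₁) = φ.toFun (pick X R₂) :=
        rel_eq_of_mem (ai_mem φ hm₁) (ai_mem φ hm₂) hp hp₂
      have hpe : pick X R₁ = pick X R₂ := ai_inj φ hm₁ hm₂ this
      rw [← hrho₁, ← hrho₂, hpe]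
    · rintro t'' ⟨s', hs', hno', rfl⟩
      obtain ⟨r, hr, rfl⟩ := ai_surj φ hs'
      have hnor : NotEOff X r := noteoff_transport' φ hr hno'
      have hRmem : rho X r ∈ Q.S := (hQmem X hQ).2 ⟨r, hr, rfl⟩
      refine ⟨rho X r, hRmem, ?_⟩
      show res X' (φ.toFun (pick X (rho X r))) = res X' (φ.toFun r)
      rw [pick_eq hhtf hr hnor rfl]
  card_eq := by
    intro R₁ h₁ R₂ h₂ R₃ h₃ P hP P' hP'
    obtain ⟨hm₁, hno₁, hrho₁⟩ := pick_spec hhtf ((hQmem X hQ).1 h₁)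
    obtain ⟨hm₂, hno₂, hrho₂⟩ := pick_spec hhtf ((hQmem X hQ).1 h₂)
    obtain ⟨hm₃, hno₃, hrho₃⟩ := pick_spec hhtf ((hQmem X hQ).1 h₃)
    rw [← hrho₃] at hP
    obtain ⟨⟨α, β⟩, hαβ, rfl⟩ := hP
    obtain ⟨x, y⟩ := P'
    have hxy : ((x : Ω₂), (y : Ω₂)) ∈ φ.toFun (pick X R₃) := hP'
    show interNum R₁ R₂ (Prod.map (qmap X) (qmap X) (α, β)) =
      interNum (res X' (φ.toFun (pick X R₁))) (res X' (φ.toFun (pick X R₂))) (x, y)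
    rw [res_interNum hhtf' (ai_mem φ hm₁) (ai_mem φ hm₂)
      (noteoff_transport φ hm₁ hno₁) (noteoff_transport φ hm₂ hno₂)]
    have key := quotNum_transport hhtf hhtf' φ hm₁ hm₂ hm₃ hαβ hxy
    rw [hrho₁, hrho₂] at key
    exact key
  
end Main

end CC15
namespace CC15

open Set

set_option linter.unusedSectionVars false
set_option linter.unusedVariables false
set_option maxHeartbeats 1000000

attribute [local instance] Classical.propDecidable

section Lift

lemma exists_bijOn_of_ncard_eq {α : Type x} {β : Type y} [Fintype α] [Fintype β]
    {s : Set α} {t : Set β} (hne : t.Nonempty) (h : s.ncard = t.ncard) :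
    ∃ g : α → β, Set.BijOn g s t := by
  have hc : Fintype.card s = Fintype.card t := by
    rw [← Set.toFinset_card, ← Set.toFinset_card,
      ← Set.ncard_eq_toFinset_card', ← Set.ncard_eq_toFinset_card', h]
  have e : ↥s ≃ ↥t := Fintype.equivOfCardEq hc
  refine ⟨fun a => if ha : a ∈ s then (e ⟨a, ha⟩ : β) else hne.some, ?_, ?_, ?_⟩
  · intro a ha
    simp only [dif_pos ha]
    exact (e ⟨a, ha⟩).2
  · intro a₁ h₁ a₂ h₂ heq
    simp only [dif_pos h₁, dif_pos h₂] at heq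
    have h3 : e ⟨a₁, h₁⟩ = e ⟨a₂, h₂⟩ := Subtype.coe_injective heq
    have := e.injective h3
    exact congrArg Subtype.val this
  · intro y hy
    refine ⟨(e.symm ⟨y, hy⟩ : α), (e.symm ⟨y, hy⟩).2, ?_⟩
    simp only [dif_pos (e.symm ⟨y, hy⟩).2]
    have h4 : (⟨(e.symm ⟨y, hy⟩ : α), (e.symm ⟨y, hy⟩).2⟩ : s) = e.symm ⟨y, hy⟩ := rfl
    rw [h4, e.apply_symm_apply]

variable {Ω Ω₂ : Type x} [Fintype Ω] [Fintype Ω₂]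
variable {X : CoherentConfiguration Ω} {X' : CoherentConfiguration Ω₂}

lemma good_case (hhtf : HTF X) (hhtf' : HTF X') (φ : AlgIso X X')
    (Q : CoherentConfiguration (Quot (XTwin X)))
    (hQ : Q.S = (fun s => Prod.map (Quot.mk (XTwin X)) (Quot.mk (XTwin X)) '' s) '' X.S)
    (fb : Quot (XTwin X) → ↥(reps X')) (hfb_bij : Function.Bijective fb)
    (hfb : ∀ R ∈ Q.S, (tPhi hhtf hhtf' φ Q hQ).toFun R = Prod.map fb fb '' R) :
    ∃ f : Ω → Ω₂, Function.Bijective f ∧ ∀ s ∈ X.S, φ.toFun s = Prod.map f f '' s := by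
  set τ : ↥(reps X') → Quot (XTwin X') := fun v => qmap X' (v : Ω₂) with hτ
  have hτ_inj : Function.Injective τ := fun v₁ v₂ h => Subtype.ext (reps_inj v₁.2 v₂.2 h)
  have hkey : ∀ r ∈ X.S, NotEOff X r →
      res X' (φ.toFun r) = Prod.map fb fb '' (rho X r) := by
    intro r hr hno
    have hR : rho X r ∈ Q.S := (hQmem X hQ).2 ⟨r, hr, rfl⟩
    have h0 := hfb (rho X r) hR
    rw [show (tPhi hhtf hhtf' φ Q hQ).toFun (rho X r)
        = res X' (φ.toFun (pick X (rho X r))) from rfl, pick_eq hhtf hr hno rfl] at h0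
    exact h0
  have stepA : ∀ a : Ω, ((fb (qmap X a) : Ω₂), (fb (qmap X a) : Ω₂)) ∈
      φ.toFun (relOf X (a, a)) := by
    intro a
    have hd : relOf X (a, a) ∈ X.S := relOf_mem X _
    have hdd : IsDiag (relOf X (a, a)) := relOf_diag_isDiag a
    have h1 := hkey _ hd (Or.inl hdd)
    have h2 : (qmap X a, qmap X a) ∈ rho X (relOf X (a, a)) := mem_rho_of_mem (mem_relOf X _)
    have h3 : (fb (qmap X a), fb (qmap X a)) ∈ res X' (φ.toFun (relOf X (a, a))) := by
      rw [h1]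
      exact ⟨(qmap X a, qmap X a), h2, rfl⟩
    exact h3
  have stepA' : ∀ a : Ω, relOf X' ((fb (qmap X a) : Ω₂), (fb (qmap X a) : Ω₂)) =
      φ.toFun (relOf X (a, a)) :=
    fun a => relOf_eq (ai_mem φ (relOf_mem X _)) (stepA a)
  have hcard : ∀ q : Quot (XTwin X), (qset X q).ncard = (qset X' (τ (fb q))).ncard := by
    intro q
    obtain ⟨a, rfl⟩ := Quot.exists_rep q
    have h1 : (qset X (Quot.mk (XTwin X) a)).ncard = mval X (relOf X (a, a)) :=
      qset_card hhtf a
    have h2 : (qset X' (τ (fb (Quot.mk (XTwin X) a)))).ncard =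
        mval X' (relOf X' ((fb (qmap X a) : Ω₂), (fb (qmap X a) : Ω₂))) :=
      qset_card hhtf' _
    rw [h1, h2, stepA' a, ai_mval φ hhtf' (relOf_mem X _)]
  have hex : ∀ q : Quot (XTwin X), ∃ g : Ω → Ω₂,
      Set.BijOn g (qset X q) (qset X' (τ (fb q))) :=
    fun q => exists_bijOn_of_ncard_eq (qset_nonempty _) (hcard q)
  set G : Quot (XTwin X) → Ω → Ω₂ := fun q => (hex q).choose with hG
  have hGbij : ∀ q, Set.BijOn (G q) (qset X q) (qset X' (τ (fb q))) :=
    fun q => (hex q).choose_spec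
  set f : Ω → Ω₂ := fun a => G (qmap X a) a with hf
  have hfq : ∀ a : Ω, qmap X' (f a) = τ (fb (qmap X a)) :=
    fun a => (hGbij (qmap X a)).mapsTo (mem_qset_self a)
  have hf_inj : Function.Injective f := by
    intro a b heq
    have h1 : τ (fb (qmap X a)) = τ (fb (qmap X b)) := by
      rw [← hfq a, ← hfq b, heq]
    have h2 : qmap X a = qmap X b := hfb_bij.1 (hτ_inj h1)
    have hbmem : b ∈ qset X (qmap X a) := h2.symm
    have h3 : G (qmap X a) a = G (qmap X a) b := by
      show f a = G (qmap X a) b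
      rw [heq]
      show G (qmap X b) b = G (qmap X a) b
      rw [h2]
    exact (hGbij (qmap X a)).injOn (mem_qset_self a) hbmem h3
  have hf_surj : Function.Surjective f := by
    intro y
    obtain ⟨q, hq⟩ := hfb_bij.2 ⟨Quot.out (qmap X' y), out_mem_reps _⟩
    have hy : y ∈ qset X' (τ (fb q)) := by
      show qmap X' y = τ (fb q)
      rw [hq]
      show qmap X' y = qmap X' (Quot.out (qmap X' y))
      rw [qmap_out]
    obtain ⟨a, ha, hga⟩ := (hGbij q).surjOn hy
    refine ⟨a, ?_⟩
    show G (qmap X a) a = y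
    have h5 : qmap X a = q := ha
    rw [h5, hga]
  have coreB : ∀ d ∈ X.S, IsDiag d → ∀ a : Ω, ((a, a) ∈ d ↔ (f a, f a) ∈ φ.toFun d) := by
    intro d hd hdd a
    have hAa : relOf X' (f a, f a) = φ.toFun (relOf X (a, a)) := by
      have htw : XTwin X' (f a) (fb (qmap X a) : Ω₂) := by
        apply qmap_eq_iff.1
        rw [hfq a]
      have h6 := hhtf' _ _ htw
      rw [h6, stepA' a]
    rw [mem_diag_iff hd]
    constructor
    · intro h
      rw [h, ← hAa]
      exact mem_relOf X' _
    · intro h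
      have h7 : φ.toFun d = relOf X' (f a, f a) := (relOf_eq (ai_mem φ hd) h).symm
      rw [hAa] at h7
      exact ai_inj φ hd (relOf_mem X _) h7
  have claim : ∀ s ∈ X.S, ∀ a b : Ω, ((a, b) ∈ s ↔ (f a, f b) ∈ φ.toFun s) := by
    intro s hs a b
    by_cases hdd : IsDiag s
    · constructor
      · intro h
        have hab : a = b := hdd _ h
        subst hab
        exact (coreB s hs hdd a).1 h
      · intro h
        have hab : f a = f b := (ai_isDiag φ hs).2 hdd _ h
        have hab2 : a = b := hf_inj hab
        subst hab2
        exact (coreB s hs hdd a).2 h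
    · rcases etype_or_cross hs with he | hc
      · have hch : twinChar X s := he.resolve_left hdd
        have hch' : twinChar X' (φ.toFun s) := (ai_twinChar φ hs).2 hch
        have hdd' : ¬ IsDiag (φ.toFun s) := fun hh => hdd ((ai_isDiag φ hs).1 hh)
        have hstruct := etype_offdiag_struct hhtf hs hdd hch
        have hstruct' := etype_offdiag_struct hhtf' (ai_mem φ hs) hdd' hch'
        constructor
        · intro h
          rw [hstruct] at h
          obtain ⟨hne, htw, hmem⟩ := h
          rw [hstruct']
          refine ⟨fun hh => hne (hf_inj hh), ?_, ?_⟩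
          · apply qmap_eq_iff.1
            rw [hfq a, hfq b, qmap_eq_iff.2 htw]
          · rw [← ai_dminus φ hs]
            exact (coreB _ (dminus_mem_S hs) (dminus_isDiag hs) a).1 hmem
        · intro h
          rw [hstruct'] at h
          obtain ⟨hne, htw, hmem⟩ := h
          rw [hstruct]
          refine ⟨fun hh => hne (congrArg f hh), ?_, ?_⟩
          · apply qmap_eq_iff.1
            have h1 : qmap X' (f a) = qmap X' (f b) := qmap_eq_iff.2 htw
            rw [hfq a, hfq b] at h1
            exact hfb_bij.1 (hτ_inj h1)
          · rw [← ai_dminus φ hs] at hmem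
            exact (coreB _ (dminus_mem_S hs) (dminus_isDiag hs) a).2 hmem
      · have hc' : Cross X' (φ.toFun s) := (ai_cross φ hs).2 hc
        have hres := hkey s hs (Or.inr hc)
        constructor
        · intro h
          have h1 : (qmap X a, qmap X b) ∈ rho X s := mem_rho_of_mem h
          have h2 : (fb (qmap X a), fb (qmap X b)) ∈ res X' (φ.toFun s) := by
            rw [hres]
            exact ⟨_, h1, rfl⟩
          have h3 : ((fb (qmap X a) : Ω₂), (fb (qmap X b) : Ω₂)) ∈ φ.toFun s := h2
          have h4 := mem_rho_of_mem (Y := X') h3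
          have h5 : (qmap X' (f a), qmap X' (f b)) ∈ rho X' (φ.toFun s) := by
            rw [hfq a, hfq b]
            exact h4
          exact (rho_cross_iff (ai_mem φ hs) hc').1 h5
        · intro h
          have h1 : (qmap X' (f a), qmap X' (f b)) ∈ rho X' (φ.toFun s) := mem_rho_of_mem h
          rw [hfq a, hfq b] at h1
          have h2 : ((fb (qmap X a) : Ω₂), (fb (qmap X b) : Ω₂)) ∈ φ.toFun s :=
            (rho_cross_iff (ai_mem φ hs) hc').1 h1
          have h3 : (fb (qmap X a), fb (qmap X b)) ∈ res X' (φ.toFun s) := h2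
          rw [hres] at h3
          obtain ⟨⟨q₁, q₂⟩, hq, heq⟩ := h3
          simp only [Prod.map, Prod.mk.injEq] at heq
          have e1 : q₁ = qmap X a := hfb_bij.1 heq.1
          have e2 : q₂ = qmap X b := hfb_bij.1 heq.2
          rw [e1, e2] at hq
          exact (rho_cross_iff hs hc).1 hq
  refine ⟨f, ⟨hf_inj, hf_surj⟩, ?_⟩
  intro s hs
  ext ⟨x, y⟩
  constructor
  · intro h
    obtain ⟨a, rfl⟩ := hf_surj x
    obtain ⟨b, rfl⟩ := hf_surj y
    exact ⟨(a, b), (claim s hs a b).2 h, rfl⟩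
  · rintro ⟨⟨a, b⟩, hab, heq⟩
    have h8 : (f a, f b) = (x, y) := heq
    rw [← h8]
    exact (claim s hs a b).1 hab

end Lift

end CC15
namespace CC15

open Set

set_option linter.unusedSectionVars false
set_option linter.unusedVariables false
set_option maxHeartbeats 1000000

attribute [local instance] Classical.propDecidable

section BadCase

variable {Ω : Type x} {Ω₂ : Type y} [Fintype Ω] [Fintype Ω₂]
variable {X : CoherentConfiguration Ω} {X' : CoherentConfiguration Ω₂}

lemma bad_case (hbad : BadCC X) (φ : AlgIso X X') :
    ∃ f : Ω → Ω₂, Function.Bijective f ∧ ∀ s ∈ X.S, φ.toFun s = Prod.map f f '' s := by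
  obtain ⟨s₀, hs₀, hoff₀, hch₀, hne₀⟩ := hbad
  obtain ⟨⟨a, b⟩, hab₀⟩ := rel_nonempty hs₀
  have htw : XTwin X a b := pair_of_twinChar hs₀ hch₀ hab₀
  have hab : a ≠ b := offdiag_of_not_isDiag hs₀ hoff₀ _ hab₀
  have hda_db : relOf X (a, a) ≠ relOf X (b, b) := by
    rw [← dminus_eq hs₀ hab₀, ← dplus_eq hs₀ hab₀]
    exact hne₀
  have hcover : ∀ c : Ω, c = a ∨ c = b := by
    intro c
    by_contra hc
    push_neg at hc
    exact hda_db (same_fiber_of_third htw hc.1 hc.2)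
  set da := relOf X (a, a) with hda_def
  set db := relOf X (b, b) with hdb_def
  set o := relOf X (a, b) with ho_def
  have hda : da ∈ X.S := relOf_mem X _
  have hdb : db ∈ X.S := relOf_mem X _
  have ho : o ∈ X.S := relOf_mem X _
  have hdaD : IsDiag da := relOf_diag_isDiag a
  have hdbD : IsDiag db := relOf_diag_isDiag b
  have hmaa : (a, a) ∈ da := mem_relOf X _
  have hmbb : (b, b) ∈ db := mem_relOf X _
  have hmab : (a, b) ∈ o := mem_relOf X _
  have hoffo : ¬ IsDiag o := fun hd => hab (hd _ hmab)
  -- the four basis relations are singletons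
  have hda_eq : da = {(a, a)} := by
    ext ⟨c, d⟩
    simp only [Set.mem_singleton_iff, Prod.mk.injEq]
    constructor
    · intro h
      have hcd : c = d := hdaD _ h
      subst hcd
      rcases hcover c with rfl | rfl
      · exact ⟨rfl, rfl⟩
      · exact absurd (rel_eq_of_mem hda hdb h hmbb) hda_db
    · rintro ⟨rfl, rfl⟩
      exact hmaa
  have hdb_eq : db = {(b, b)} := by
    ext ⟨c, d⟩
    simp only [Set.mem_singleton_iff, Prod.mk.injEq]
    constructor
    · intro h
      have hcd : c = d := hdbD _ h
      subst hcd
      rcases hcover c with rfl | rfl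
      · exact absurd (rel_eq_of_mem hda hdb hmaa h) hda_db
      · exact ⟨rfl, rfl⟩
    · rintro ⟨rfl, rfl⟩
      exact hmbb
  have hba_no : (b, a) ∉ o := by
    intro hba
    have key := interNum_const hda ho ho hmab hba
    rw [interNum_diag_left hdaD, interNum_diag_left hdaD, if_pos ⟨hmaa, hmab⟩] at key
    by_cases hc : (b, b) ∈ da ∧ (b, a) ∈ o
    · exact hda_db (rel_eq_of_mem hda hdb hc.1 hmbb)
    · rw [if_neg hc] at key
      omega
  have ho_eq : o = {(a, b)} := by
    ext ⟨c, d⟩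
    simp only [Set.mem_singleton_iff, Prod.mk.injEq]
    constructor
    · intro h
      have hcd : c ≠ d := offdiag_of_not_isDiag ho hoffo _ h
      rcases hcover c with rfl | rfl <;> rcases hcover d with rfl | rfl
      · exact absurd rfl hcd
      · exact ⟨rfl, rfl⟩
      · exact absurd h hba_no
      · exact absurd rfl hcd
    · rintro ⟨rfl, rfl⟩
      exact hmab
  set o2 := conv o with ho2_def
  have ho2 : o2 ∈ X.S := conv_mem ho
  have ho2_eq : o2 = {(b, a)} := by
    rw [ho2_def, ho_eq]
    ext ⟨c, d⟩
    simp [conv, Prod.ext_iff, and_comm]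
  have hSchar : ∀ u ∈ X.S, u = da ∨ u = db ∨ u = o ∨ u = o2 := by
    intro u hu
    obtain ⟨⟨c, d⟩, hcd⟩ := rel_nonempty hu
    rcases hcover c with rfl | rfl <;> rcases hcover d with rfl | rfl
    · exact Or.inl (rel_eq_of_mem hu hda hcd hmaa)
    · exact Or.inr (Or.inr (Or.inl (rel_eq_of_mem hu ho hcd hmab)))
    · refine Or.inr (Or.inr (Or.inr (rel_eq_of_mem hu ho2 hcd ?_)))
      rw [ho2_eq]
      rfl
    · exact Or.inr (Or.inl (rel_eq_of_mem hu hdb hcd hmbb))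
  -- X' side
  have hdmo : dminus X o = da := dminus_eq ho hmab
  have hdpo : dplus X o = db := dplus_eq ho hmab
  have hdmda : dminus X da = da := dminus_eq hda hmaa
  have hdmdb : dminus X db = db := dminus_eq hdb hmbb
  have hdmo2 : dminus X o2 = db := by
    apply dminus_eq ho2
    rw [ho2_eq]
    rfl
  obtain ⟨⟨x, y⟩, hxy⟩ := rel_nonempty (ai_mem φ ho)
  have hoffo' : ¬ IsDiag (φ.toFun o) := fun hh => hoffo ((ai_isDiag φ ho).1 hh)
  have hxney : x ≠ y := offdiag_of_not_isDiag (ai_mem φ ho) hoffo' _ hxy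
  have hxx : (x, x) ∈ φ.toFun da := by
    have h1 : (x, x) ∈ dminus X' (φ.toFun o) := mem_dminus (ai_mem φ ho) hxy
    rw [← ai_dminus φ ho, hdmo] at h1
    exact h1
  have hyy : (y, y) ∈ φ.toFun db := by
    have h1 : (y, y) ∈ dplus X' (φ.toFun o) := mem_dplus (ai_mem φ ho) hxy
    rw [← ai_dplus φ ho, hdpo] at h1
    exact h1
  have hda'db' : φ.toFun da ≠ φ.toFun db := fun hh => hda_db (ai_inj φ hda hdb hh)
  have hdaD' : IsDiag (φ.toFun da) := (ai_isDiag φ hda).2 hdaD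
  have hdbD' : IsDiag (φ.toFun db) := (ai_isDiag φ hdb).2 hdbD
  -- valency of o' is one
  have hnvo : nval o = 1 := by
    have h1 : {γ | (a, γ) ∈ o}.ncard = nval o := outdeg_const ho (by rw [hdmo] at *; exact hmaa)
    have h2 : {γ | (a, γ) ∈ o} = {b} := by
      ext γ
      rw [ho_eq]
      simp [Prod.ext_iff]
    rw [h2, Set.ncard_singleton] at h1
    exact h1.symm
  have hnvo' : nval (φ.toFun o) = 1 := by rw [ai_nval φ ho, hnvo]
  have hcover' : ∀ c : Ω₂, c = x ∨ c = y := by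
    intro c
    obtain ⟨w, hw, hweq⟩ := ai_surj φ (relOf_mem X' (x, c))
    have hmxc : (x, c) ∈ φ.toFun w := by rw [hweq]; exact mem_relOf X' _
    have hxxw : (x, x) ∈ dminus X' (φ.toFun w) := mem_dminus (ai_mem φ hw) hmxc
    have hxda : relOf X' (x, x) = φ.toFun da := relOf_eq (ai_mem φ hda) hxx
    have hdmw : dminus X w = da := by
      apply ai_inj φ (dminus_mem_S hw) hda
      rw [ai_dminus φ hw]
      rw [← hxda] at *
      exact (relOf_eq (dminus_mem_S (ai_mem φ hw)) hxxw).symm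
    rcases hSchar w hw with rfl | rfl | rfl | rfl
    · left
      have : x = c := hdaD' _ hmxc
      exact this.symm
    · rw [hdmdb] at hdmw
      exact absurd hdmw.symm hda_db
    · right
      have h1 : {γ | (x, γ) ∈ φ.toFun o}.ncard = 1 := by
        rw [outdeg_const (ai_mem φ ho) (by rw [← ai_dminus φ ho, hdmo]; exact hxx), hnvo']
      obtain ⟨z, hz⟩ := Set.ncard_eq_one.1 h1
      have hcz : c ∈ {γ | (x, γ) ∈ φ.toFun o} := hmxc
      have hyz : y ∈ {γ | (x, γ) ∈ φ.toFun o} := hxy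
      rw [hz] at hcz hyz
      rw [hcz, ← hyz]
    · rw [hdmo2] at hdmw
      exact absurd hdmw.symm hda_db
  -- pin down the images
  have hda'_eq : φ.toFun da = {(x, x)} := by
    ext ⟨c, d⟩
    simp only [Set.mem_singleton_iff, Prod.mk.injEq]
    constructor
    · intro h
      have hcd : c = d := hdaD' _ h
      subst hcd
      rcases hcover' c with rfl | rfl
      · exact ⟨rfl, rfl⟩
      · exact absurd (rel_eq_of_mem (ai_mem φ hda) (ai_mem φ hdb) h hyy) hda'db'
    · rintro ⟨rfl, rfl⟩
      exact hxx
  have hdb'_eq : φ.toFun db = {(y, y)} := by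
    ext ⟨c, d⟩
    simp only [Set.mem_singleton_iff, Prod.mk.injEq]
    constructor
    · intro h
      have hcd : c = d := hdbD' _ h
      subst hcd
      rcases hcover' c with rfl | rfl
      · exact absurd (rel_eq_of_mem (ai_mem φ hda) (ai_mem φ hdb) hxx h) hda'db'
      · exact ⟨rfl, rfl⟩
    · rintro ⟨rfl, rfl⟩
      exact hyy
  have hyx_no : (y, x) ∉ φ.toFun o := by
    intro h
    have h1 : (y, y) ∈ dminus X' (φ.toFun o) := mem_dminus (ai_mem φ ho) h
    rw [← ai_dminus φ ho, hdmo] at h1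
    exact hda'db' (rel_eq_of_mem (ai_mem φ hda) (ai_mem φ hdb) h1 hyy)
  have ho'_eq : φ.toFun o = {(x, y)} := by
    ext ⟨c, d⟩
    simp only [Set.mem_singleton_iff, Prod.mk.injEq]
    constructor
    · intro h
      have hcd : c ≠ d := offdiag_of_not_isDiag (ai_mem φ ho) hoffo' _ h
      rcases hcover' c with rfl | rfl <;> rcases hcover' d with rfl | rfl
      · exact absurd rfl hcd
      · exact ⟨rfl, rfl⟩
      · exact absurd h hyx_no
      · exact absurd rfl hcd
    · rintro ⟨rfl, rfl⟩
      exact hxy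
  have ho2'_eq : φ.toFun o2 = {(y, x)} := by
    rw [ho2_def, ai_conv φ ho, ho'_eq]
    ext ⟨c, d⟩
    simp [conv, Prod.ext_iff, and_comm]
  -- the bijection
  set f : Ω → Ω₂ := fun c => if c = a then x else y with hfdef
  have hfa : f a = x := if_pos rfl
  have hfb : f b = y := if_neg hab.symm
  have hf_bij : Function.Bijective f := by
    constructor
    · intro c₁ c₂ h
      rcases hcover c₁ with rfl | rfl <;> rcases hcover c₂ with rfl | rfl
      · rfl
      · rw [hfa, hfb] at h; exact absurd h hxney
      · rw [hfa, hfb] at h; exact absurd h.symm hxney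
      · rfl
    · intro z
      rcases hcover' z with rfl | rfl
      · exact ⟨a, hfa⟩
      · exact ⟨b, hfb⟩
  refine ⟨f, hf_bij, ?_⟩
  intro u hu
  rcases hSchar u hu with rfl | rfl | rfl | rfl
  · rw [hda'_eq, hda_eq, Set.image_singleton]
    simp [Prod.map, hfa]
  · rw [hdb'_eq, hdb_eq, Set.image_singleton]
    simp [Prod.map, hfb]
  · rw [ho'_eq, ho_eq, Set.image_singleton]
    simp [Prod.map, hfa, hfb]
  · rw [ho2'_eq, ho2_eq, Set.image_singleton]
    simp [Prod.map, hfa, hfb]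

end BadCase

end CC15
/-- if the quotient `X/e_X` of a coherent configuration `X` modulo its
twin parabolic is separable, then `X` is separable. -/
theorem stmt_15 {Ω : Type u} [Fintype Ω] (X : CoherentConfiguration Ω)
    (Q : CoherentConfiguration (Quot (XTwin X)))
    (hQ : Q.S = (fun s => Prod.map (Quot.mk (XTwin X)) (Quot.mk (XTwin X)) '' s) '' X.S)
    (hsep : CCSeparable Q) :
    CCSeparable X := by
  intro Ω' hfin X' φ
  haveI : Finite Ω' := hfin
  haveI : Fintype Ω' := Fintype.ofFinite Ω'
  by_cases hbad : CC15.BadCC X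
  · exact CC15.bad_case hbad φ
  · have hhtf : CC15.HTF X := CC15.htf_of_not_bad hbad
    have hhtf' : CC15.HTF X' := CC15.ai_htf φ hhtf
    obtain ⟨fb, hbij, hfb⟩ := hsep (↥(CC15.reps X')) inferInstance (CC15.transCC X' hhtf')
      (CC15.tPhi hhtf hhtf' φ Q hQ)
    exact CC15.good_case hhtf hhtf' φ Q hQ fb hbij hfb
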